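/- arXiv:math/0501163 — 6 statements merged into one kernel-verified Lean document; each statement's English description precedes it below -/
import Mathlib

section
/- For 0 < r < 1 and p > 0, the function I_p(r) = ∫₀¹ |1 - r^{1/p} e(t)|^p dt satisfies I_p(r) = Σ_{m≥0} C(p/2, m)² r^{2m/p}, where C(p/2, m) is the generalized binomial coefficient. -/
open MeasureTheory

noncomputable def e (t : ℝ) : ℂ := Complex.exp (2 * Real.pi * Complex.I * t)

/-- I_p(r) = ∫₀¹ |1 - r^{1/p} e(t)|^p dt -/
noncomputable def Ip (p r : ℝ) : ℝ :=
  ∫ t in (0:ℝ)..1, ‖(1 - ((r ^ (1/p) : ℝ) : ℂ) * e t)‖ ^ p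

/-- generalized binomial coefficient C(x, m) -/
noncomputable def genBinom (x : ℝ) (m : ℕ) : ℝ :=
  (∏ i ∈ Finset.range m, (x - i)) / (Nat.factorial m)



lemma genBinom_zero (x : ℝ) : genBinom x 0 = 1 := by simp [genBinom]

lemma genBinom_succ (x : ℝ) (m : ℕ) :
    (m + 1 : ℝ) * genBinom x (m + 1) = (x - m) * genBinom x m := by
  simp only [genBinom, Finset.prod_range_succ, Nat.factorial_succ]
  push_cast
  field_simp

lemma genBinom_eq_prod (x : ℝ) (m : ℕ) :
    |genBinom x m| = ∏ i ∈ Finset.range m, (|x - i| / (i + 1)) := by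
  rw [genBinom, abs_div, Finset.abs_prod, Finset.prod_div_distrib]
  congr 1
  · rw [abs_of_nonneg (by positivity), ← Finset.prod_range_add_one_eq_factorial m]
    push_cast
    ring

lemma genBinom_bound (x : ℝ) (hx : 0 ≤ x) :
    ∃ C : ℝ, 0 ≤ C ∧ ∀ m, |genBinom x m| ≤ C := by
  set q : ℕ → ℝ := fun i => max 1 (|x - i| / (i + 1)) with hq
  have hq1 : ∀ i, 1 ≤ q i := fun i => le_max_left _ _
  set K := ⌈x⌉₊ with hK
  refine ⟨∏ i ∈ Finset.range K, q i, by positivity, fun m => ?_⟩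
  have hqK : ∀ i, K ≤ i → q i = 1 := by
    intro i hi
    have hxi : x ≤ i := le_trans (Nat.le_ceil x) (by exact_mod_cast hi)
    have : |x - i| / (i + 1) ≤ 1 := by
      rw [abs_sub_comm, abs_of_nonneg (by linarith)]
      rw [div_le_one (by positivity)]
      linarith
    simp [hq, max_eq_left this]
  have h1 : |genBinom x m| ≤ ∏ i ∈ Finset.range m, q i := by
    rw [genBinom_eq_prod]
    apply Finset.prod_le_prod
    · intro i _; positivity
    · intro i _; exact le_max_right _ _
  refine h1.trans ?_
  rcases le_or_gt m K with h | h
  · rw [Finset.range_eq_Ico, Finset.range_eq_Ico, ← Finset.prod_Ico_consecutive _ (Nat.zero_le m) h,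
      ← Finset.range_eq_Ico]
    have h2 : (1:ℝ) ≤ ∏ i ∈ Finset.Ico m K, q i := by
      calc (1:ℝ) = ∏ i ∈ Finset.Ico m K, 1 := by simp
      _ ≤ ∏ i ∈ Finset.Ico m K, q i :=
        Finset.prod_le_prod (fun i _ => zero_le_one) (fun i _ => hq1 i)
    have h3 : (0:ℝ) ≤ ∏ i ∈ Finset.range m, q i :=
      Finset.prod_nonneg fun i _ => le_trans zero_le_one (hq1 i)
    nlinarith
  · rw [Finset.range_eq_Ico, ← Finset.prod_Ico_consecutive _ (Nat.zero_le K) h.le]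
    rw [← Finset.range_eq_Ico]
    have : ∏ i ∈ Finset.Ico K m, q i = 1 :=
      Finset.prod_eq_one fun i hi => hqK i (Finset.mem_Ico.mp hi).1
    rw [this, mul_one]

noncomputable def gser (x : ℝ) (z : ℂ) : ℂ := ∑' m : ℕ, (genBinom x m : ℂ) * z ^ m

lemma summable_aux (x : ℝ) (hx : 0 ≤ x) {c : ℝ} (hc0 : 0 ≤ c) (hc : c < 1) :
    Summable (fun m => |genBinom x m| * c ^ m) := by
  obtain ⟨C, hC0, hC⟩ := genBinom_bound x hx
  apply Summable.of_nonneg_of_le (fun m => by positivity)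
    (fun m => mul_le_mul_of_nonneg_right (hC m) (by positivity))
  exact (summable_geometric_of_lt_one hc0 hc).mul_left C

lemma summable_deriv_aux (x : ℝ) (hx : 0 ≤ x) {c : ℝ} (hc0 : 0 ≤ c) (hc : c < 1) :
    Summable (fun m : ℕ => |genBinom x m| * ((m : ℝ) * c ^ (m - 1))) := by
  obtain ⟨C, hC0, hC⟩ := genBinom_bound x hx
  set d : ℝ := max c (1/2) with hd
  have hd0 : (0:ℝ) < d := lt_of_lt_of_le (by norm_num) (le_max_right _ _)
  have hd1 : d < 1 := max_lt hc (by norm_num)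
  have hcd : c ≤ d := le_max_left _ _
  have hsum : Summable (fun m : ℕ => C * 2 * ((m:ℝ) * d ^ m)) := by
    have := summable_pow_mul_geometric_of_norm_lt_one (R := ℝ) 1
      (r := d) (by rw [Real.norm_eq_abs, abs_of_pos hd0]; exact hd1)
    simpa [pow_one] using this.mul_left (C * 2)
  apply Summable.of_nonneg_of_le (fun m => by positivity) (fun m => ?_) hsum
  have h1 : (m:ℝ) * c ^ (m-1) ≤ 2 * ((m:ℝ) * d ^ m) := by
    cases m with
    | zero => simp
    | succ n =>
      have hpow : c ^ n ≤ d ^ n := pow_le_pow_left₀ hc0 hcd n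
      have h2 : d ^ n ≤ 2 * d ^ (n + 1) := by
        rw [pow_succ]
        nlinarith [pow_nonneg hd0.le n, le_max_right c (1/2 : ℝ)]
      simp only [Nat.add_sub_cancel]
      push_cast
      nlinarith [pow_nonneg hc0 n, Nat.cast_nonneg (α := ℝ) n]
  calc |genBinom x m| * ((m:ℝ) * c ^ (m-1))
      ≤ C * ((m:ℝ) * c ^ (m-1)) :=
        mul_le_mul_of_nonneg_right (hC m) (by positivity)
    _ ≤ C * (2 * ((m:ℝ) * d ^ m)) := mul_le_mul_of_nonneg_left h1 hC0
    _ = C * 2 * ((m:ℝ) * d ^ m) := by ring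

lemma hasSum_gser (x : ℝ) (hx : 0 ≤ x) {z : ℂ} (hz : ‖z‖ < 1) :
    HasSum (fun m : ℕ => (genBinom x m : ℂ) * z ^ m) (gser x z) := by
  apply Summable.hasSum
  apply Summable.of_norm
  have : ∀ m : ℕ, ‖(genBinom x m : ℂ) * z ^ m‖ = |genBinom x m| * ‖z‖ ^ m := by
    intro m; simp [norm_mul, norm_pow, Complex.norm_real, Real.norm_eq_abs]
  rw [funext this]
  exact summable_aux x hx (norm_nonneg z) hz

lemma summable_gser_deriv (x : ℝ) (hx : 0 ≤ x) {z : ℂ} (hz : ‖z‖ < 1) :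
    Summable (fun m : ℕ => (genBinom x m : ℂ) * ((m : ℂ) * z ^ (m - 1))) := by
  apply Summable.of_norm
  have : ∀ m : ℕ, ‖(genBinom x m : ℂ) * ((m:ℂ) * z ^ (m-1))‖
      = |genBinom x m| * ((m:ℝ) * ‖z‖ ^ (m-1)) := by
    intro m
    simp [norm_mul, norm_pow, Complex.norm_real, Real.norm_eq_abs, Complex.norm_natCast]
  rw [funext this]
  exact summable_deriv_aux x hx (norm_nonneg z) hz

lemma hasDerivAt_gser (x : ℝ) (hx : 0 ≤ x) {z : ℂ} (hz : ‖z‖ < 1) :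
    HasDerivAt (gser x) (∑' m : ℕ, (genBinom x m : ℂ) * ((m : ℂ) * z ^ (m - 1))) z := by
  obtain ⟨C, hC0, hC⟩ := genBinom_bound x hx
  set ρ : ℝ := (1 + ‖z‖) / 2 with hρ
  have hρ0 : (0:ℝ) < ρ := by positivity
  have hρ1 : ρ < 1 := by rw [hρ]; linarith
  have hρhalf : (1:ℝ)/2 ≤ ρ := by rw [hρ]; linarith [norm_nonneg z]
  have hzρ : ‖z‖ < ρ := by rw [hρ]; linarith
  have hsum : Summable (fun m : ℕ => C * 2 * ((m:ℝ) * ρ ^ m)) := by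
    have := summable_pow_mul_geometric_of_norm_lt_one (R := ℝ) 1
      (r := ρ) (by rw [Real.norm_eq_abs, abs_of_pos hρ0]; exact hρ1)
    simpa [pow_one] using this.mul_left (C * 2)
  have key := hasDerivAt_tsum_of_isPreconnected hsum (Metric.isOpen_ball)
    (convex_ball (0:ℂ) ρ).isPreconnected
    (g := fun m y => (genBinom x m : ℂ) * y ^ m)
    (g' := fun m y => (genBinom x m : ℂ) * ((m : ℂ) * y ^ (m - 1)))
    (fun n y _ => (hasDerivAt_pow n y).const_mul _)
    (fun n y hy => ?_) (Metric.mem_ball_self hρ0) ?_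
    (by rw [Metric.mem_ball, dist_zero_right]; exact hzρ)
  · exact key
  · have hy' : ‖y‖ ≤ ρ := by
      rw [Metric.mem_ball, dist_zero_right] at hy; exact hy.le
    have h1 : ‖(genBinom x n : ℂ) * ((n : ℂ) * y ^ (n - 1))‖
        = |genBinom x n| * ((n:ℝ) * ‖y‖ ^ (n-1)) := by
      simp [norm_mul, norm_pow, Complex.norm_real, Real.norm_eq_abs, Complex.norm_natCast]
    rw [h1]
    have h2 : (n:ℝ) * ‖y‖ ^ (n-1) ≤ 2 * ((n:ℝ) * ρ ^ n) := by
      cases n with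
      | zero => simp
      | succ k =>
        have hpow : ‖y‖ ^ k ≤ ρ ^ k := pow_le_pow_left₀ (norm_nonneg y) hy' k
        have h3 : ρ ^ k ≤ 2 * ρ ^ (k+1) := by
          rw [pow_succ]
          nlinarith [pow_nonneg hρ0.le k]
        simp only [Nat.add_sub_cancel]
        push_cast
        nlinarith [pow_nonneg (norm_nonneg y) k, Nat.cast_nonneg (α := ℝ) k]
    calc |genBinom x n| * ((n:ℝ) * ‖y‖ ^ (n-1))
        ≤ C * ((n:ℝ) * ‖y‖ ^ (n-1)) := mul_le_mul_of_nonneg_right (hC n) (by positivity)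
      _ ≤ C * (2 * ((n:ℝ) * ρ ^ n)) := mul_le_mul_of_nonneg_left h2 hC0
      _ = C * 2 * ((n:ℝ) * ρ ^ n) := by ring
  · apply summable_of_ne_finset_zero (s := {0})
    intro n hn
    have : n ≠ 0 := by simpa using hn
    simp [zero_pow this]

lemma gser_deriv_rel (x : ℝ) (hx : 0 ≤ x) {z : ℂ} (hz : ‖z‖ < 1) :
    (1 + z) * (∑' m : ℕ, (genBinom x m : ℂ) * ((m : ℂ) * z ^ (m - 1)))
      = (x : ℂ) * gser x z := by
  set A : ℕ → ℂ := fun m => (genBinom x m : ℂ) with hA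
  set D : ℂ := ∑' m : ℕ, A m * ((m : ℂ) * z ^ (m - 1)) with hD
  have h1 : HasSum (fun m : ℕ => A m * ((m : ℂ) * z ^ (m - 1))) D :=
    (summable_gser_deriv x hx hz).hasSum
  have h2 : HasSum (fun m : ℕ => A (m+1) * (((m:ℂ)+1) * z ^ m)) D := by
    have := (hasSum_nat_add_iff' (f := fun m : ℕ => A m * ((m : ℂ) * z ^ (m - 1))) 1).2 h1
    simpa using this
  have h3 : HasSum (fun m : ℕ => (m:ℂ) * (A m * z ^ m)) (z * D) := by
    have h := h1.mul_left z
    have heq : (fun m : ℕ => z * (A m * ((m : ℂ) * z ^ (m - 1))))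
        = fun m : ℕ => (m:ℂ) * (A m * z ^ m) := by
      funext m
      cases m with
      | zero => simp
      | succ k => simp only [Nat.add_sub_cancel]; push_cast; ring_nf
        
    rwa [heq] at h
  have h4 := h2.add h3
  have h5 : (fun m : ℕ => A (m+1) * (((m:ℂ)+1) * z ^ m) + (m:ℂ) * (A m * z ^ m))
      = fun m : ℕ => (x:ℂ) * (A m * z ^ m) := by
    funext m
    have hr : ((m:ℝ) + 1) * genBinom x (m + 1) + (m:ℝ) * genBinom x m
        = x * genBinom x m := by
      have := genBinom_succ x m; linarith [this]
    have hrc : ((m:ℂ) + 1) * A (m+1) + (m:ℂ) * A m = (x:ℂ) * A m := by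
      rw [hA]
      push_cast
      exact_mod_cast congrArg Complex.ofReal hr
    linear_combination z ^ m * hrc
  rw [h5] at h4
  have h6 := (hasSum_gser x hx hz).mul_left (x:ℂ)
  have := h4.unique h6
  rw [add_mul, one_mul, ← this]

lemma one_add_ne_zero_of_norm_lt_one {z : ℂ} (hz : ‖z‖ < 1) : (1 : ℂ) + z ≠ 0 := by
  intro h
  have : z = -1 := by linear_combination h
  rw [this] at hz
  simp at hz

lemma one_add_mem_slitPlane {z : ℂ} (hz : ‖z‖ < 1) : (1 : ℂ) + z ∈ Complex.slitPlane := by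
  left
  have : |z.re| ≤ ‖z‖ := Complex.abs_re_le_norm z
  have h1 : -1 < z.re := by
    have h2 : |z.re| < 1 := lt_of_le_of_lt this hz
    rcases abs_lt.mp h2 with ⟨h, _⟩
    linarith
  simp only [Complex.add_re, Complex.one_re]
  linarith

lemma gser_zero (x : ℝ) : gser x 0 = 1 := by
  rw [gser, tsum_eq_single 0 (fun n hn => by simp [zero_pow hn])]
  simp [genBinom_zero]

lemma gser_eq_cpow (x : ℝ) (hx : 0 ≤ x) {z : ℂ} (hz : ‖z‖ < 1) :
    gser x z = (1 + z) ^ (x : ℂ) := by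
  set h : ℂ → ℂ := fun y => gser x y * (1 + y) ^ (-(x:ℂ)) with hh
  have hball : ∀ y ∈ Metric.ball (0:ℂ) 1, ‖y‖ < 1 := by
    intro y hy; rwa [Metric.mem_ball, dist_zero_right] at hy
  have hder : ∀ y ∈ Metric.ball (0:ℂ) 1, HasDerivAt h 0 y := by
    intro y hy
    have hy1 : ‖y‖ < 1 := hball y hy
    have hne : (1:ℂ) + y ≠ 0 := one_add_ne_zero_of_norm_lt_one hy1
    have hg := hasDerivAt_gser x hx hy1
    have hc : HasDerivAt (fun w : ℂ => (1 + w) ^ (-(x:ℂ)))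
        (-(x:ℂ) * (1 + y) ^ (-(x:ℂ) - 1) * 1) y :=
      HasDerivAt.cpow_const ((hasDerivAt_id y).const_add 1) (one_add_mem_slitPlane hy1)
    have hmul := hg.mul hc
    refine HasDerivAt.congr_deriv (f := h) hmul ?_
    have hsplit : (1 + y) ^ (-(x:ℂ)) = (1 + y) ^ (-(x:ℂ) - 1) * (1 + y) := by
      have he : (-(x:ℂ)) = (-(x:ℂ) - 1) + 1 := by ring
      conv_lhs => rw [he]
      rw [Complex.cpow_add _ _ hne, Complex.cpow_one]
    have hrel := gser_deriv_rel x hx hy1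
    rw [hsplit]
    linear_combination ((1 + y) ^ (-(x:ℂ) - 1)) * hrel
  have hz' : z ∈ Metric.ball (0:ℂ) 1 := by
    rw [Metric.mem_ball, dist_zero_right]; exact hz
  have h0' : (0:ℂ) ∈ Metric.ball (0:ℂ) 1 := Metric.mem_ball_self one_pos
  have hconst : h z = h 0 := by
    apply Convex.is_const_of_fderivWithin_eq_zero (convex_ball (0:ℂ) 1)
      (fun y hy => ((hder y hy).differentiableAt).differentiableWithinAt)
      (fun y hy => ?_) hz' h0'
    rw [fderivWithin_of_isOpen Metric.isOpen_ball hy, ((hder y hy).hasFDerivAt).fderiv]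
    ext w
    simp
  have h0v : h 0 = 1 := by
    rw [hh]
    simp [gser_zero, Complex.one_cpow]
  rw [h0v] at hconst
  have hne : (1:ℂ) + z ≠ 0 := one_add_ne_zero_of_norm_lt_one hz
  have : gser x z * ((1 + z) ^ (-(x:ℂ)) * (1 + z) ^ (x:ℂ)) = (1 + z) ^ (x:ℂ) := by
    rw [← mul_assoc]
    rw [hh] at hconst
    simp only at hconst
    rw [hconst, one_mul]
  rwa [← Complex.cpow_add _ _ hne, neg_add_cancel, Complex.cpow_zero, mul_one] at this

lemma abs_gser (x : ℝ) (hx : 0 ≤ x) {z : ℂ} (hz : ‖z‖ < 1) :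
    ‖gser x z‖ = ‖1 + z‖ ^ x := by
  rw [gser_eq_cpow x hx hz,
    Complex.norm_cpow_of_ne_zero (one_add_ne_zero_of_norm_lt_one hz)]
  simp


lemma abs_e (t : ℝ) : ‖e t‖ = 1 := by
  rw [e, show (2 * (Real.pi:ℂ) * Complex.I * (t:ℝ)) = ((2 * Real.pi * t : ℝ) : ℂ) * Complex.I by
    push_cast; ring]
  exact Complex.norm_exp_ofReal_mul_I _

lemma e_pow_conj_eq (m n : ℕ) (t : ℝ) :
    (e t) ^ m * (starRingEnd ℂ) ((e t) ^ n)
      = Complex.exp ((2 * Real.pi * Complex.I * ((m:ℂ) - n)) * t) := by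
  rw [e, ← Complex.exp_nat_mul, map_pow, ← Complex.exp_conj, ← Complex.exp_nat_mul,
    ← Complex.exp_add]
  congr 1
  rw [map_mul, map_mul, map_mul, Complex.conj_I, Complex.conj_ofReal,
    Complex.conj_ofReal, map_ofNat]
  push_cast
  ring

lemma integral_e_orth (m n : ℕ) :
    (∫ t in (0:ℝ)..1, (e t) ^ m * (starRingEnd ℂ) ((e t) ^ n))
      = if m = n then 1 else 0 := by
  simp only [e_pow_conj_eq]
  rcases eq_or_ne m n with h | h
  · subst h
    simp
  · rw [if_neg h]
    have hc : (2 * (Real.pi:ℂ) * Complex.I * ((m:ℂ) - n)) ≠ 0 := by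
      apply mul_ne_zero
      · simp [Real.pi_ne_zero, Complex.I_ne_zero, Complex.ofReal_ne_zero]
      · rw [sub_ne_zero]
        exact_mod_cast fun hh => h (Nat.cast_injective hh)
    rw [integral_exp_mul_complex hc]
    have h1 : (2 * (Real.pi:ℂ) * Complex.I * ((m:ℂ) - n)) * (1:ℝ)
        = ((m:ℤ) - (n:ℤ) : ℤ) * (2 * Real.pi * Complex.I) := by push_cast; ring
    rw [h1, Complex.exp_int_mul_two_pi_mul_I]
    simp

open MeasureTheory in
lemma parseval (x : ℝ) (hx : 0 ≤ x) (s : ℝ) (hs0 : 0 ≤ s) (hs1 : s < 1) :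
    (∫ t in (0:ℝ)..1, ‖1 - (s:ℂ) * e t‖ ^ (2*x))
      = ∑' m : ℕ, (genBinom x m)^2 * s^(2*m) := by
  set A : ℕ → ℂ := fun m => (genBinom x m : ℂ) with hA
  set w : ℝ → ℂ := fun t => -((s:ℂ) * e t) with hwdef
  have hw : ∀ t, ‖w t‖ = s := by
    intro t
    rw [hwdef]
    simp only [norm_neg, norm_mul, Complex.norm_real, Real.norm_eq_abs, abs_of_nonneg hs0]
    rw [abs_e, mul_one]
  have hws : ∀ t, ‖w t‖ < 1 := fun t => by rw [hw t]; exact hs1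
  set μ : Measure ℝ := volume.restrict (Set.Ioc (0:ℝ) 1) with hμ
  haveI : IsFiniteMeasure μ := by
    constructor
    rw [hμ, Measure.restrict_apply MeasurableSet.univ, Set.univ_inter, Real.volume_Ioc]
    simp
  have hμuniv : (μ Set.univ).toReal = 1 := by
    rw [hμ, Measure.restrict_apply MeasurableSet.univ, Set.univ_inter, Real.volume_Ioc]
    simp
  have hwcont : Continuous w := by
    rw [hwdef]
    apply Continuous.neg
    apply continuous_const.mul
    unfold e
    fun_prop
  have hgw_eq : (fun t => gser x (w t)) = fun t => (1 + w t) ^ (x:ℂ) :=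
    funext fun t => gser_eq_cpow x hx (hws t)
  have hgw_cont : Continuous fun t => gser x (w t) := by
    rw [hgw_eq]
    apply continuous_iff_continuousAt.mpr
    intro t
    apply ContinuousAt.cpow ((continuous_const.add hwcont).continuousAt) continuousAt_const
    exact one_add_mem_slitPlane (hws t)
  have hM : ∀ t, ‖gser x (w t)‖ ≤ 2 ^ x := by
    intro t
    rw [abs_gser x hx (hws t)]
    apply Real.rpow_le_rpow (norm_nonneg _) _ hx
    calc ‖1 + w t‖ ≤ ‖(1:ℂ)‖ + ‖w t‖ := norm_add_le _ _
      _ ≤ 1 + s := by rw [norm_one]; rw [hw t]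
      _ ≤ 2 := by linarith
  -- inner integral
  have hinner : ∀ m : ℕ, (∫ t, (w t)^m * (starRingEnd ℂ) (gser x (w t)) ∂μ)
      = A m * (s:ℂ)^(2*m) := by
    intro m
    set F : ℕ → ℝ → ℂ := fun n t => (w t)^m * (starRingEnd ℂ) (A n * (w t)^n) with hF
    have hFcont : ∀ n, Continuous (F n) := by
      intro n
      apply Continuous.mul ((hwcont.pow m))
      exact Complex.continuous_conj.comp (continuous_const.mul (hwcont.pow n))
    have hFint : ∀ n, Integrable (F n) μ := fun n => (hFcont n).integrableOn_Ioc
    have hFnorm : ∀ n t, ‖F n t‖ = |genBinom x n| * s^(m+n) := by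
      intro n t
      rw [hF]
      simp only [norm_mul, norm_pow, RCLike.norm_conj, hw t, hA, Complex.norm_real,
        Real.norm_eq_abs]
      ring
    have hFsum : Summable (fun n => ∫ t, ‖F n t‖ ∂μ) := by
      have : (fun n => ∫ t, ‖F n t‖ ∂μ) = fun n => |genBinom x n| * s^(m+n) := by
        funext n
        rw [funext (hFnorm n) , integral_const, measureReal_def, hμuniv, one_smul]
      rw [this]
      simp only [pow_add]
      have := (summable_aux x hx hs0 hs1).mul_left (s^m)
      apply this.congr
      intro n; ring
    have hpt : (fun t => (w t)^m * (starRingEnd ℂ) (gser x (w t)))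
        = fun t => ∑' n, F n t := by
      funext t
      have h1 : HasSum (fun n => (starRingEnd ℂ) ((genBinom x n : ℂ) * (w t)^n))
          ((starRingEnd ℂ) (gser x (w t))) := by
        have h0 := (hasSum_gser x hx (hws t)).mapL Complex.conjCLE.toContinuousLinearMap
        simp only [ContinuousLinearEquiv.coe_coe, Complex.conjCLE_apply] at h0
        exact h0
      have h2 := h1.mul_left ((w t)^m)
      rw [hF]
      exact h2.tsum_eq.symm
    rw [hpt, ← MeasureTheory.integral_tsum_of_summable_integral_norm hFint hFsum]
    have hFval : ∀ n, (∫ t, F n t ∂μ)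
        = (starRingEnd ℂ) (A n) * (-(s:ℂ))^(m+n) * (if m = n then 1 else 0) := by
      intro n
      have hFre : F n = fun t => (starRingEnd ℂ) (A n) * (-(s:ℂ))^(m+n)
          * ((e t)^m * (starRingEnd ℂ) ((e t)^n)) := by
        funext t
        rw [hF]
        simp only [hwdef, map_mul, map_pow, map_neg, Complex.conj_ofReal]
        rw [pow_add]
        ring_nf
      rw [hFre]
      rw [MeasureTheory.integral_const_mul]
      congr 1
      rw [hμ, ← intervalIntegral.integral_of_le zero_le_one]
      exact integral_e_orth m n
    rw [funext hFval]
    rw [tsum_eq_single m (fun n hn => by rw [if_neg (fun h => hn h.symm), mul_zero])]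
    rw [if_pos rfl, mul_one, hA]
    rw [Complex.conj_ofReal]
    have : (-(s:ℂ))^(m+m) = (s:ℂ)^(2*m) := by
      rw [Even.neg_pow ⟨m, rfl⟩, two_mul]
    rw [this]
  -- outer integral
  have houter : (∫ t, gser x (w t) * (starRingEnd ℂ) (gser x (w t)) ∂μ)
      = ∑' m : ℕ, A m * (A m * (s:ℂ)^(2*m)) := by
    set F : ℕ → ℝ → ℂ := fun n t => A n * ((w t)^n * (starRingEnd ℂ) (gser x (w t))) with hF
    have hFcont : ∀ n, Continuous (F n) := by
      intro n
      exact continuous_const.mul ((hwcont.pow n).mul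
        (Complex.continuous_conj.comp hgw_cont))
    have hFint : ∀ n, Integrable (F n) μ := fun n => (hFcont n).integrableOn_Ioc
    have hFbound : ∀ n t, ‖F n t‖ ≤ |genBinom x n| * s^n * 2^x := by
      intro n t
      rw [hF]
      simp only [norm_mul, norm_pow, RCLike.norm_conj, hw t, hA, Complex.norm_real,
        Real.norm_eq_abs]
      have := hM t
      have h1 : (0:ℝ) ≤ |genBinom x n| * s^n := by positivity
      calc |genBinom x n| * (s^n * ‖gser x (w t)‖)
          ≤ |genBinom x n| * (s^n * 2^x) := by
            apply mul_le_mul_of_nonneg_left _ (abs_nonneg _)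
            exact mul_le_mul_of_nonneg_left this (by positivity)
        _ = |genBinom x n| * s^n * 2^x := by ring
    have hFsum : Summable (fun n => ∫ t, ‖F n t‖ ∂μ) := by
      apply Summable.of_nonneg_of_le
        (fun n => integral_nonneg (fun t => norm_nonneg _))
        (fun n => ?_)
        (((summable_aux x hx hs0 hs1).mul_right (2^x)))
      calc (∫ t, ‖F n t‖ ∂μ) ≤ ∫ _, |genBinom x n| * s^n * 2^x ∂μ :=
            integral_mono (hFint n).norm (integrable_const _) (hFbound n)
        _ = |genBinom x n| * s^n * 2^x := by rw [integral_const, measureReal_def, hμuniv, one_smul]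
    have hpt : (fun t => gser x (w t) * (starRingEnd ℂ) (gser x (w t)))
        = fun t => ∑' n, F n t := by
      funext t
      have h1 := (hasSum_gser x hx (hws t)).mul_right ((starRingEnd ℂ) (gser x (w t)))
      have h2 : (fun n => A n * (w t)^n * (starRingEnd ℂ) (gser x (w t)))
          = fun n => F n t := by funext n; rw [hF]; ring
      rw [h2] at h1
      exact h1.tsum_eq.symm
    rw [hpt, ← MeasureTheory.integral_tsum_of_summable_integral_norm hFint hFsum]
    apply tsum_congr
    intro n
    rw [hF]
    simp only
    rw [MeasureTheory.integral_const_mul, hinner n]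
  -- assembly
  have hfinal : ((∫ t in (0:ℝ)..1, ‖1 - (s:ℂ) * e t‖ ^ (2*x) : ℝ) : ℂ)
      = ∑' m : ℕ, A m * (A m * (s:ℂ)^(2*m)) := by
    rw [← intervalIntegral.integral_ofReal]
    have hpt : ∀ t : ℝ, ((‖1 - (s:ℂ) * e t‖ ^ (2*x) : ℝ) : ℂ)
        = gser x (w t) * (starRingEnd ℂ) (gser x (w t)) := by
      intro t
      rw [Complex.mul_conj, ← Complex.sq_norm]
      have h1 : (1:ℂ) + w t = 1 - (s:ℂ) * e t := by rw [hwdef]; ring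
      rw [abs_gser x hx (hws t), h1]
      congr 1
      rw [← Real.rpow_natCast (‖1 - (s:ℂ) * e t‖ ^ x) 2,
        ← Real.rpow_mul (norm_nonneg _)]
      norm_num [mul_comm]
    simp_rw [hpt]
    rw [intervalIntegral.integral_of_le zero_le_one]
    exact houter
  have hsumR : Summable (fun m : ℕ => (genBinom x m)^2 * s^(2*m)) := by
    obtain ⟨C, hC0, hC⟩ := genBinom_bound x hx
    have hss0 : (0:ℝ) ≤ s*s := mul_self_nonneg s
    have hss1 : s*s < 1 := by nlinarith
    apply Summable.of_nonneg_of_le (fun m => by positivity) (fun m => ?_)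
      ((summable_aux x hx hss0 hss1).mul_left C)
    have hpow : (s*s)^m = s^(2*m) := by
      rw [two_mul, pow_add, mul_pow]
    rw [hpow]
    have h2 : (genBinom x m)^2 = |genBinom x m| * |genBinom x m| := by
      rw [sq, ← abs_mul_abs_self]
    rw [h2]
    calc |genBinom x m| * |genBinom x m| * s^(2*m)
        ≤ C * |genBinom x m| * s^(2*m) :=
          mul_le_mul_of_nonneg_right
            (mul_le_mul_of_nonneg_right (hC m) (abs_nonneg _))
            (pow_nonneg hs0 _)
      _ = C * (|genBinom x m| * s^(2*m)) := by ring
  have hcast : ((∑' m : ℕ, (genBinom x m)^2 * s^(2*m) : ℝ) : ℂ)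
      = ∑' m : ℕ, A m * (A m * (s:ℂ)^(2*m)) := by
    rw [Complex.ofReal_tsum]
    apply tsum_congr
    intro m
    rw [hA]
    push_cast
    ring
  apply Complex.ofReal_injective
  rw [hfinal, hcast]


theorem Ip_series (p r : ℝ) (hp : 0 < p) (hr0 : 0 < r) (hr1 : r < 1) :
    Ip p r = ∑' m : ℕ, (genBinom (p/2) m) ^ 2 * r ^ ((2 * m) / p : ℝ) := by
  unfold Ip
  set x : ℝ := p / 2 with hxdef
  set s : ℝ := r ^ (1/p) with hsdef
  have hx : 0 ≤ x := by positivity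
  have hs0 : 0 ≤ s := Real.rpow_nonneg hr0.le _
  have hs1 : s < 1 := Real.rpow_lt_one hr0.le hr1 (by positivity)
  have h2x : 2 * x = p := by rw [hxdef]; ring
  have hpar := parseval x hx s hs0 hs1
  rw [h2x] at hpar
  rw [hpar]
  apply tsum_congr
  intro m
  congr 1
  rw [hsdef, ← Real.rpow_natCast (r ^ (1/p)) (2*m), ← Real.rpow_mul hr0.le]
  congr 1
  push_cast
  ring
end

section
/- If 0 < p ≤ 2, then for all r > 0, I_p(r) ≥ I_p(1)·(1 + r)/2. -/
open MeasureTheory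

/-- Increments of `x ^ q` are decreasing for `0 < q ≤ 1`. -/
lemma inc_aux {q d a b : ℝ} (hq0 : 0 < q) (hq1 : q ≤ 1) (hd : 0 ≤ d)
    (ha : 0 ≤ a) (hab : a ≤ b) :
    (b + d) ^ q - b ^ q ≤ (a + d) ^ q - a ^ q := by
  have H : AntitoneOn (fun x : ℝ => (x + d) ^ q - x ^ q) (Set.Ici 0) := by
    have hder : ∀ x : ℝ, x ∈ Set.Ioi (0:ℝ) →
        HasDerivAt (fun x : ℝ => (x + d) ^ q - x ^ q)
          (1 * q * (x + d) ^ (q - 1) - 1 * q * x ^ (q - 1)) x := by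
      intro x hx
      have hx0 : (0:ℝ) < x := hx
      have h1 : HasDerivAt (fun x : ℝ => (x + d) ^ q) (1 * q * (x + d) ^ (q - 1)) x := by
        have := ((hasDerivAt_id x).add_const d).rpow_const (p := q)
          (Or.inl (by positivity : x + d ≠ 0))
        simpa using this
      have h2 : HasDerivAt (fun x : ℝ => x ^ q) (1 * q * x ^ (q - 1)) x := by
        have := (hasDerivAt_id x).rpow_const (p := q) (Or.inl hx0.ne')
        simpa using this
      exact h1.sub h2
    apply antitoneOn_of_deriv_nonpos (convex_Ici 0)
    · apply Continuous.continuousOn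
      exact (((continuous_id.add continuous_const).rpow_const (p := q)
        (fun x => Or.inr hq0.le)).sub (continuous_id.rpow_const (p := q)
        (fun x => Or.inr hq0.le)))
    · intro x hx
      rw [interior_Ici] at hx
      exact (hder x hx).differentiableAt.differentiableWithinAt
    · intro x hx
      rw [interior_Ici] at hx
      rw [(hder x hx).deriv]
      have hx0 : (0:ℝ) < x := hx
      have : (x + d) ^ (q - 1) ≤ x ^ (q - 1) :=
        Real.rpow_le_rpow_of_nonpos hx0 (by linarith) (by linarith)
      nlinarith
  exact H (Set.mem_Ici.2 ha) (Set.mem_Ici.2 (ha.trans hab)) hab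

/-- Two-point majorization inequality for the concave function `x ^ q`. -/
lemma two_point {q W W' A B : ℝ} (hq0 : 0 < q) (hq1 : q ≤ 1)
    (hW : 0 ≤ W) (hWA : W ≤ A) (hAB : A ≤ B) (hWW' : W ≤ W')
    (hsum : W + W' ≤ A + B) :
    W ^ q + W' ^ q ≤ A ^ q + B ^ q := by
  rcases le_total W' B with h | h
  · have h1 : W ^ q ≤ A ^ q := Real.rpow_le_rpow hW hWA hq0.le
    have h2 : W' ^ q ≤ B ^ q := Real.rpow_le_rpow (hW.trans hWW') h hq0.le
    linarith
  · have hd : 0 ≤ W' - B := by linarith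
    have k1 : (B + (W' - B)) ^ q - B ^ q ≤ (W + (W' - B)) ^ q - W ^ q :=
      inc_aux hq0 hq1 hd hW (hWA.trans hAB)
    have k3 : (W + (W' - B)) ^ q ≤ A ^ q :=
      Real.rpow_le_rpow (by linarith) (by linarith) hq0.le
    have hBW : B + (W' - B) = W' := by ring
    rw [hBW] at k1
    linarith

/-- Power mean inequality: `(1 + x^q)/2 ≤ ((1+x)/2)^q` for `0 < q ≤ 1`. -/
lemma powmean {q x : ℝ} (hq0 : 0 < q) (hq1 : q ≤ 1) (hx : 0 ≤ x) :
    (1 + x ^ q) / 2 ≤ ((1 + x) / 2) ^ q := by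
  have h := (Real.concaveOn_rpow hq0.le hq1).2 (Set.mem_Ici.2 (zero_le_one))
    (Set.mem_Ici.2 hx) (by norm_num : (0:ℝ) ≤ 1/2) (by norm_num : (0:ℝ) ≤ 1/2)
    (by norm_num)
  simp only [smul_eq_mul] at h
  rw [Real.one_rpow] at h
  calc (1 + x ^ q) / 2 = 1/2 * 1 + 1/2 * x ^ q := by ring
    _ ≤ (1/2 * 1 + 1/2 * x) ^ q := h
    _ = ((1 + x) / 2) ^ q := by norm_num; ring_nf

/-- Key algebraic inequality, assuming `w ≤ w'`. -/
lemma key' {q s w w' : ℝ} (hq0 : 0 < q) (hq1 : q ≤ 1) (hs : 0 < s)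
    (hw : 0 ≤ w) (hsum : w + w' = 4) (hww' : w ≤ w') :
    (1 + s ^ (2*q)) / 2 * (w ^ q + w' ^ q)
      ≤ ((1-s)^2 + s*w) ^ q + ((1-s)^2 + s*w') ^ q := by
  have hw' : 0 ≤ w' := le_trans hw hww'
  set lam : ℝ := (1 + s ^ (2*q)) / 2 with hlam
  have hlam0 : 0 < lam := by
    have : 0 < s ^ (2*q) := Real.rpow_pos_of_pos hs _
    rw [hlam]; linarith
  set mu : ℝ := lam ^ (1/q) with hmu
  have hmu0 : 0 ≤ mu := Real.rpow_nonneg hlam0.le _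
  have hmuq : mu ^ q = lam := by
    rw [hmu, ← Real.rpow_mul hlam0.le, one_div, inv_mul_cancel₀ hq0.ne', Real.rpow_one]
  have hsq : (s^2 : ℝ) = s ^ (2:ℝ) := by
    rw [← Real.rpow_natCast s 2]; norm_num
  have ha : lam ≤ ((1 + s^2) / 2) ^ q := by
    have h := powmean hq0 hq1 (sq_nonneg s)
    have h2 : (s^2) ^ q = s ^ (2*q) := by
      rw [hsq, ← Real.rpow_mul hs.le]
    rw [h2] at h
    exact h
  have hbase : (0:ℝ) ≤ (1 + s^2)/2 := by positivity
  have hmule : mu ≤ (1 + s^2) / 2 := by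
    calc mu = lam ^ (1/q) := hmu
      _ ≤ (((1 + s^2)/2) ^ q) ^ (1/q) :=
          Real.rpow_le_rpow hlam0.le ha (by positivity)
      _ = ((1 + s^2)/2) ^ (q * (1/q)) := (Real.rpow_mul hbase q (1/q)).symm
      _ = (1 + s^2)/2 := by
          rw [mul_one_div, div_self hq0.ne', Real.rpow_one]
  set A : ℝ := (1-s)^2 + s*w with hA
  set B : ℝ := (1-s)^2 + s*w' with hB
  have hw2 : w ≤ 2 := by linarith
  have hWA : mu * w ≤ A := by
    have h1 : mu * w ≤ (1 + s^2)/2 * w := mul_le_mul_of_nonneg_right hmule hw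
    have h2 : (1 + s^2)/2 * w ≤ A := by
      rw [hA]
      nlinarith [mul_nonneg (sq_nonneg (1-s)) (by linarith : (0:ℝ) ≤ 2 - w)]
    linarith
  have hAB : A ≤ B := by
    rw [hA, hB]
    nlinarith
  have hsum2 : mu * w + mu * w' ≤ A + B := by
    have : mu * w + mu * w' = 4 * mu := by rw [← mul_add, hsum]; ring
    rw [this, hA, hB]
    nlinarith
  have hW0 : 0 ≤ mu * w := mul_nonneg hmu0 hw
  have hWW' : mu * w ≤ mu * w' := mul_le_mul_of_nonneg_left hww' hmu0
  have htp := two_point hq0 hq1 hW0 hWA hAB hWW' hsum2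
  have e1 : (mu * w) ^ q = lam * w ^ q := by
    rw [Real.mul_rpow hmu0 hw, hmuq]
  have e2 : (mu * w') ^ q = lam * w' ^ q := by
    rw [Real.mul_rpow hmu0 hw', hmuq]
  rw [e1, e2] at htp
  calc lam * (w ^ q + w' ^ q) = lam * w ^ q + lam * w' ^ q := by ring
    _ ≤ A ^ q + B ^ q := htp

/-- Key algebraic inequality. -/
lemma key {q s w w' : ℝ} (hq0 : 0 < q) (hq1 : q ≤ 1) (hs : 0 < s)
    (hw : 0 ≤ w) (hw' : 0 ≤ w') (hsum : w + w' = 4) :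
    (1 + s ^ (2*q)) / 2 * (w ^ q + w' ^ q)
      ≤ ((1-s)^2 + s*w) ^ q + ((1-s)^2 + s*w') ^ q := by
  rcases le_total w w' with h | h
  · exact key' hq0 hq1 hs hw hsum h
  · have := key' hq0 hq1 hs hw' (by linarith) h
    linarith

theorem Ip_lower_bound (p r : ℝ) (hp0 : 0 < p) (hp2 : p ≤ 2) (hr : 0 < r) :
    Ip p r ≥ Ip p 1 * (1 + r) / 2 := by
  have hq0 : 0 < p/2 := by linarith
  have hq1 : p/2 ≤ 1 := by linarith
  set ρ : ℝ := r ^ (1/p) with hρdef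
  have hρ : 0 < ρ := Real.rpow_pos_of_pos hr _
  have hρp : ρ ^ (2 * (p/2)) = r := by
    have h2 : 2 * (p/2) = p := by ring
    rw [h2, hρdef, ← Real.rpow_mul hr.le, one_div, inv_mul_cancel₀ hp0.ne', Real.rpow_one]
  -- continuity of e
  have hecont : Continuous e := by
    unfold e
    exact Complex.continuous_exp.comp (by continuity)
  have hcont : ∀ b : ℂ, Continuous (fun t : ℝ => ‖1 - b * e t‖ ^ p) := by
    intro b
    exact (continuous_norm.comp
      (continuous_const.sub (continuous_const.mul hecont))).rpow_const
      (fun x => Or.inr hp0.le)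
  have hcont' : ∀ b : ℂ, Continuous (fun t : ℝ => ‖1 + b * e t‖ ^ p) := by
    intro b
    have : (fun t : ℝ => ‖1 + b * e t‖ ^ p)
        = fun t : ℝ => ‖1 - (-b) * e t‖ ^ p := by
      funext t; ring_nf
    rw [this]; exact hcont (-b)
  -- |e t| = 1
  have habs1 : ∀ t : ℝ, (e t).re^2 + (e t).im^2 = 1 := by
    intro t
    have h : ‖e t‖ = 1 := by
      unfold e
      have h2 : 2 * (Real.pi:ℂ) * Complex.I * (t:ℝ)
          = ((2*Real.pi*t : ℝ):ℂ) * Complex.I := by push_cast; ring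
      rw [h2, Complex.norm_exp_ofReal_mul_I]
    have h3 : Complex.normSq (e t) = 1 := by rw [← Complex.sq_norm, h]; norm_num
    rw [Complex.normSq_apply] at h3
    linear_combination h3
  -- shift by 1/2
  have hshift : ∀ t : ℝ, e (t + 1/2) = - e t := by
    intro t
    unfold e
    have h : 2 * (Real.pi:ℂ) * Complex.I * (((t + 1/2 : ℝ)):ℂ)
        = 2*(Real.pi:ℂ)*Complex.I*(t:ℝ) + (Real.pi:ℂ)*Complex.I := by push_cast; ring
    rw [h, Complex.exp_add, Complex.exp_pi_mul_I]
    ring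
  -- abs^p = normSq^(p/2)
  have habsp : ∀ x : ℂ, ‖x‖ ^ p = Complex.normSq x ^ (p/2) := by
    intro x
    rw [← Complex.sq_norm, ← Real.rpow_natCast ‖x‖ 2,
      ← Real.rpow_mul (norm_nonneg _)]
    norm_num
    congr 1
    ring
  -- pointwise inequality
  have hpt : ∀ t : ℝ,
      (1 + r)/2 * (‖1 - e t‖ ^ p + ‖1 + e t‖ ^ p)
        ≤ ‖1 - (ρ:ℂ) * e t‖ ^ p + ‖1 + (ρ:ℂ) * e t‖ ^ p := by
    intro t
    have hc := habs1 t
    set c := (e t).re with hcdef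
    have hc1 : c ≤ 1 := by nlinarith [sq_nonneg (e t).im]
    have hc2 : -1 ≤ c := by nlinarith [sq_nonneg (e t).im]
    have n1 : Complex.normSq (1 - (ρ:ℂ) * e t) = (1-ρ)^2 + ρ*(2-2*c) := by
      simp [Complex.normSq_apply, Complex.sub_re, Complex.sub_im, Complex.mul_re,
        Complex.mul_im, Complex.one_re, Complex.one_im, Complex.ofReal_re,
        Complex.ofReal_im]
      linear_combination (ρ^2) * hc
    have n2 : Complex.normSq (1 + (ρ:ℂ) * e t) = (1-ρ)^2 + ρ*(2+2*c) := by
      simp [Complex.normSq_apply, Complex.add_re, Complex.add_im, Complex.mul_re,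
        Complex.mul_im, Complex.one_re, Complex.one_im, Complex.ofReal_re,
        Complex.ofReal_im]
      linear_combination (ρ^2) * hc
    have n3 : Complex.normSq (1 - e t) = 2 - 2*c := by
      simp [Complex.normSq_apply, Complex.sub_re, Complex.sub_im, Complex.one_re,
        Complex.one_im]
      linear_combination hc
    have n4 : Complex.normSq (1 + e t) = 2 + 2*c := by
      simp [Complex.normSq_apply, Complex.add_re, Complex.add_im, Complex.one_re,
        Complex.one_im]
      linear_combination hc
    have hk := key (q := p/2) (s := ρ) (w := 2 - 2*c) (w' := 2 + 2*c)
      hq0 hq1 hρ (by linarith) (by linarith) (by ring)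
    rw [hρp] at hk
    rw [habsp, habsp, habsp, habsp, n1, n2, n3, n4]
    exact hk
  -- halving the integral
  have hsplit : ∀ h : ℝ → ℝ, Continuous h →
      (∫ t in (0:ℝ)..1, h t) = ∫ t in (0:ℝ)..(1/2:ℝ), (h t + h (t + 1/2)) := by
    intro h hc
    have h2 : (∫ t in (0:ℝ)..(1/2:ℝ), h (t + 1/2)) = ∫ t in (1/2:ℝ)..(1:ℝ), h t := by
      rw [intervalIntegral.integral_comp_add_right (a := (0:ℝ)) (b := (1/2:ℝ))
        (f := h) (1/2)]
      norm_num
    have hint2 : IntervalIntegrable (fun t : ℝ => h (t + 1/2)) volume 0 (1/2) := by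
      have : Continuous fun t : ℝ => h (t + 1/2) := hc.comp (by continuity)
      exact this.intervalIntegrable _ _
    calc (∫ t in (0:ℝ)..1, h t)
        = (∫ t in (0:ℝ)..(1/2:ℝ), h t) + ∫ t in (1/2:ℝ)..(1:ℝ), h t :=
          (intervalIntegral.integral_add_adjacent_intervals
            (hc.intervalIntegrable _ _) (hc.intervalIntegrable _ _)).symm
      _ = (∫ t in (0:ℝ)..(1/2:ℝ), h t) + ∫ t in (0:ℝ)..(1/2:ℝ), h (t + 1/2) := by
          rw [h2]
      _ = ∫ t in (0:ℝ)..(1/2:ℝ), (h t + h (t + 1/2)) :=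
          (intervalIntegral.integral_add (hc.intervalIntegrable _ _) hint2).symm
  have hIp_eq : ∀ s : ℝ,
      (∫ t in (0:ℝ)..1, ‖1 - (s:ℂ) * e t‖ ^ p)
        = ∫ t in (0:ℝ)..(1/2:ℝ),
            (‖1 - (s:ℂ) * e t‖ ^ p + ‖1 + (s:ℂ) * e t‖ ^ p) := by
    intro s
    rw [hsplit _ (hcont s)]
    apply intervalIntegral.integral_congr
    intro t ht
    have h4 : (1 : ℂ) - (s:ℂ) * e (t + 1/2) = 1 + (s:ℂ) * e t := by
      rw [hshift t]; ring
    simp only [h4]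
  have hIpr : Ip p r = ∫ t in (0:ℝ)..(1/2:ℝ),
      (‖1 - (ρ:ℂ) * e t‖ ^ p + ‖1 + (ρ:ℂ) * e t‖ ^ p) := by
    unfold Ip
    exact hIp_eq ρ
  have hIp1 : Ip p 1 = ∫ t in (0:ℝ)..(1/2:ℝ),
      (‖1 - e t‖ ^ p + ‖1 + e t‖ ^ p) := by
    unfold Ip
    rw [Real.one_rpow]
    have h5 := hIp_eq 1
    simp only [Complex.ofReal_one, one_mul] at h5 ⊢
    exact h5
  rw [ge_iff_le, hIpr, hIp1]
  have hconst : (∫ t in (0:ℝ)..(1/2:ℝ),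
        (‖1 - e t‖ ^ p + ‖1 + e t‖ ^ p)) * (1 + r) / 2
      = ∫ t in (0:ℝ)..(1/2:ℝ),
        (1 + r)/2 * (‖1 - e t‖ ^ p + ‖1 + e t‖ ^ p) := by
    rw [intervalIntegral.integral_const_mul]
    ring
  rw [hconst]
  have c1 : Continuous fun t : ℝ => ‖1 - e t‖ ^ p := by
    have := hcont 1; simpa using this
  have c2 : Continuous fun t : ℝ => ‖1 + e t‖ ^ p := by
    have := hcont' 1; simpa using this
  exact intervalIntegral.integral_mono_on (by norm_num : (0:ℝ) ≤ 1/2)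
    ((continuous_const.mul (c1.add c2)).intervalIntegrable _ _)
    (((hcont ρ).add (hcont' ρ)).intervalIntegrable _ _)
    (fun t _ => hpt t)
end

section
/- For p > 0, ∫₀¹ |1 - e(t)|^p dt = Γ(p+1)/Γ(p/2+1)², where e(t) = exp(2πi t) and Γ is the gamma function. -/
open MeasureTheory

open MeasureTheory Real Set intervalIntegral

lemma beta_integrable {a b : ℝ} (ha : -1 < a) (hb : -1 < b) :
    IntervalIntegrable (fun x : ℝ => x ^ a * (1 - x) ^ b) volume 0 1 := by
  have h1 : IntervalIntegrable (fun x : ℝ => x ^ a * (1 - x) ^ b) volume 0 (1/2) := by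
    apply (intervalIntegral.intervalIntegrable_rpow' ha).mul_continuousOn
    apply ContinuousOn.rpow_const (continuous_const.sub continuous_id).continuousOn
    intro x hx
    rw [Set.uIcc_of_le (by norm_num)] at hx
    left; have := hx.2; norm_num at this ⊢; linarith
  have h2 : IntervalIntegrable (fun x : ℝ => x ^ a * (1 - x) ^ b) volume (1/2) 1 := by
    have base : IntervalIntegrable (fun x : ℝ => (1 - x) ^ b) volume (1/2) 1 := by
      have := (intervalIntegral.intervalIntegrable_rpow' hb (a := 0) (b := 1/2)).comp_sub_left 1
      norm_num at this
      exact this.symm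
    have cont : ContinuousOn (fun x : ℝ => x ^ a) (uIcc (1/2) 1) := by
      apply ContinuousOn.rpow_const continuous_id.continuousOn
      intro x hx
      rw [Set.uIcc_of_le (by norm_num)] at hx
      left; have := hx.1; positivity
    have := base.mul_continuousOn cont
    exact this.congr (fun x _ => mul_comm _ _)
  exact h1.trans h2

lemma beta_value {a b : ℝ} (ha : -1 < a) (hb : -1 < b) :
    ∫ x in (0:ℝ)..1, x ^ a * (1 - x) ^ b =
      Real.Gamma (a + 1) * Real.Gamma (b + 1) / Real.Gamma (a + b + 2) := by
  have key := Complex.Gamma_mul_Gamma_eq_betaIntegral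
    (s := ((a : ℂ) + 1)) (t := ((b : ℂ) + 1)) (by simp; linarith) (by simp; linarith)
  have heq : Complex.betaIntegral ((a:ℂ)+1) ((b:ℂ)+1)
      = ((∫ x in (0:ℝ)..1, x ^ a * (1 - x) ^ b : ℝ) : ℂ) := by
    rw [Complex.betaIntegral, ← intervalIntegral.integral_ofReal]
    apply intervalIntegral.integral_congr
    intro x hx
    rw [Set.uIcc_of_le (by norm_num)] at hx
    simp only [add_sub_cancel_right, Complex.ofReal_mul]
    rw [← Complex.ofReal_one, ← Complex.ofReal_sub, ← Complex.ofReal_cpow hx.1,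
      ← Complex.ofReal_cpow (by linarith [hx.2])]
  rw [heq] at key
  have hne : Complex.Gamma ((a:ℂ) + 1 + ((b:ℂ) + 1)) ≠ 0 := by
    apply Complex.Gamma_ne_zero_of_re_pos
    simp; linarith
  have : ((Real.Gamma (a+1) * Real.Gamma (b+1) / Real.Gamma (a+b+2) : ℝ) : ℂ)
      = ((∫ x in (0:ℝ)..1, x ^ a * (1 - x) ^ b : ℝ) : ℂ) := by
    push_cast
    rw [← Complex.Gamma_ofReal, ← Complex.Gamma_ofReal, ← Complex.Gamma_ofReal]
    push_cast
    have h2 : (a:ℂ) + b + 2 = (a:ℂ) + 1 + ((b:ℂ) + 1) := by ring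
    rw [h2, div_eq_iff hne, key]
    ring
  exact_mod_cast this.symm
open scoped Interval

noncomputable def gg (p : ℝ) (x : ℝ) : ℝ := (2:ℝ)^(p-1)/π * (x ^ ((p-1)/2) * (1 - x) ^ (-(1:ℝ)/2))

lemma pointwise_eq {p : ℝ} (hp : 0 < p) {t : ℝ} (ht : t ∈ Ioo (0:ℝ) (1/2)) :
    (2*π*Real.sin (π*t)*Real.cos (π*t)) * gg p (Real.sin (π*t)^2)
      = (2 * Real.sin (π*t)) ^ p := by
  have hs : 0 < Real.sin (π*t) :=
    Real.sin_pos_of_pos_of_lt_pi (mul_pos Real.pi_pos ht.1) (by nlinarith [ht.2, Real.pi_pos])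
  have hc : 0 < Real.cos (π*t) := by
    apply Real.cos_pos_of_mem_Ioo
    constructor <;> nlinarith [ht.1, ht.2, Real.pi_pos]
  set s := Real.sin (π*t)
  set c := Real.cos (π*t)
  have h1 : (1:ℝ) - s^2 = c^2 := by
    have := Real.sin_sq_add_cos_sq (π*t); linarith
  have h2 : (s^2 : ℝ) ^ ((p-1)/2) = s ^ (p-1) := by
    rw [← Real.rpow_natCast s 2, ← Real.rpow_mul hs.le]
    congr 1; ring
  have h3 : (c^2 : ℝ) ^ (-(1:ℝ)/2) = c⁻¹ := by
    rw [← Real.rpow_natCast c 2, ← Real.rpow_mul hc.le]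
    norm_num [Real.rpow_neg_one]
  rw [gg, h1, h2, h3, Real.mul_rpow (by norm_num) hs.le,
    show s ^ (p-1) = s^p * s⁻¹ by
      rw [Real.rpow_sub hs, Real.rpow_one]; ring,
    show (2:ℝ)^(p-1) = 2^p * 2⁻¹ by
      rw [Real.rpow_sub (by norm_num), Real.rpow_one]; ring]
  field_simp

lemma subst_lemma (p : ℝ) (hp : 0 < p) :
    ∫ t in (0:ℝ)..(1/2), (2 * Real.sin (π * t)) ^ p = ∫ x in (0:ℝ)..1, gg p x := by
  have hae : ∀ᵐ x : ℝ, x ≠ 1/2 := by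
    have : (volume : Measure ℝ) {(1/2 : ℝ)} = 0 := measure_singleton _
    exact compl_mem_ae_iff.mpr this
  have hf : ContinuousOn (fun t : ℝ => Real.sin (π*t)^2) [[0, (1/2:ℝ)]] :=
    ((Real.continuous_sin.comp (continuous_const.mul continuous_id)).pow 2).continuousOn
  have hff' : ∀ x ∈ Ioo (min (0:ℝ) (1/2)) (max 0 (1/2)),
      HasDerivWithinAt (fun t : ℝ => Real.sin (π*t)^2)
        (2*π*Real.sin (π*x)*Real.cos (π*x)) (Ioi x) x := by
    intro x _
    have h1 : HasDerivAt (fun t:ℝ => π * t) π x := by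
      simpa using (hasDerivAt_id x).const_mul π
    have h2 : HasDerivAt (fun t:ℝ => Real.sin (π*t)) (Real.cos (π*x) * π) x :=
      (Real.hasDerivAt_sin _).comp x h1
    have h3 := h2.fun_pow 2
    refine h3.hasDerivWithinAt.congr_deriv ?_
    push_cast; ring
  have himg : (fun t : ℝ => Real.sin (π*t)^2) '' (Ioo (min (0:ℝ) (1/2)) (max 0 (1/2))) ⊆ Ioo 0 1 := by
    rintro _ ⟨t, ht, rfl⟩
    dsimp only
    rw [min_eq_left (by norm_num), max_eq_right (by norm_num)] at ht
    have hs : 0 < Real.sin (π*t) :=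
      Real.sin_pos_of_pos_of_lt_pi (mul_pos Real.pi_pos ht.1) (by nlinarith [ht.2, Real.pi_pos])
    have hc : 0 < Real.cos (π*t) := by
      apply Real.cos_pos_of_mem_Ioo
      constructor <;> nlinarith [ht.1, ht.2, Real.pi_pos]
    have := Real.sin_sq_add_cos_sq (π*t)
    constructor
    · positivity
    · nlinarith [mul_pos hc hc]
  have hg_cont : ContinuousOn (gg p) ((fun t : ℝ => Real.sin (π*t)^2) ''
      (Ioo (min (0:ℝ) (1/2)) (max 0 (1/2)))) := by
    apply ContinuousOn.mono ?_ himg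
    apply ContinuousOn.mul continuousOn_const
    apply ContinuousOn.mul
    · apply ContinuousOn.rpow_const continuous_id.continuousOn
      exact fun x hx => Or.inl (ne_of_gt hx.1)
    · apply ContinuousOn.rpow_const (continuous_const.sub continuous_id).continuousOn
      intro x hx
      exact Or.inl (sub_ne_zero.mpr (ne_of_gt hx.2))
  have himg2 : (fun t : ℝ => Real.sin (π*t)^2) '' [[(0:ℝ), 1/2]] ⊆ Icc 0 1 := by
    rintro _ ⟨t, _, rfl⟩
    dsimp only
    constructor
    · positivity
    · nlinarith [Real.sin_sq_add_cos_sq (π*t), sq_nonneg (Real.cos (π*t))]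
  have hg1 : IntegrableOn (gg p) ((fun t : ℝ => Real.sin (π*t)^2) '' [[(0:ℝ), 1/2]]) := by
    apply IntegrableOn.mono_set ?_ himg2
    have hii : IntervalIntegrable (gg p) volume 0 1 := by
      have := (beta_integrable (a := (p-1)/2) (b := -(1:ℝ)/2) (by linarith) (by norm_num)).const_mul
        ((2:ℝ)^(p-1)/π)
      exact this
    exact (intervalIntegrable_iff_integrableOn_Icc_of_le (by norm_num)).1 hii
  have hg2 : IntegrableOn (fun x => (2*π*Real.sin (π*x)*Real.cos (π*x)) •
      gg p (Real.sin (π*x)^2)) [[(0:ℝ), 1/2]] := by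
    have hcont : Continuous (fun t : ℝ => (2 * Real.sin (π * t)) ^ p) :=
      (continuous_const.mul
        (Real.continuous_sin.comp (continuous_const.mul continuous_id))).rpow_const
        (fun _ => Or.inr hp.le)
    rw [Set.uIcc_of_le (by norm_num)]
    apply (hcont.integrableOn_Icc (a := 0) (b := 1/2)).congr
    filter_upwards [ae_restrict_mem measurableSet_Icc, ae_restrict_of_ae hae] with x hmem hx
    by_cases h0 : x = 0
    · subst h0
      norm_num [gg, Real.zero_rpow hp.ne']
    · have hx' : x ∈ Ioo (0:ℝ) (1/2) :=
        ⟨lt_of_le_of_ne hmem.1 (Ne.symm h0), lt_of_le_of_ne hmem.2 hx⟩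
      rw [smul_eq_mul, pointwise_eq hp hx']
  have key := intervalIntegral.integral_comp_smul_deriv''' (a := 0) (b := 1/2)
    hf hff' hg_cont hg1 hg2
  rw [show Real.sin (π*(0:ℝ))^2 = 0 by simp, show Real.sin (π*(1/2:ℝ))^2 = 1 by
    rw [show π * (1/2:ℝ) = π/2 by ring, Real.sin_pi_div_two]; norm_num] at key
  rw [← key]
  apply intervalIntegral.integral_congr_ae
  filter_upwards [hae] with x hx hmem
  rw [Set.uIoc_of_le (by norm_num)] at hmem
  have hx' : x ∈ Ioo (0:ℝ) (1/2) := ⟨hmem.1, lt_of_le_of_ne hmem.2 hx⟩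
  simp only [Function.comp_apply, smul_eq_mul]
  rw [← pointwise_eq hp hx']

lemma abs_one_sub_e {t : ℝ} (h0 : 0 ≤ t) (h1 : t ≤ 1) :
    ‖1 - e t‖ = 2 * Real.sin (π * t) := by
  have he : e t = Complex.ofReal (Real.cos (2*π*t))
      + Complex.ofReal (Real.sin (2*π*t)) * Complex.I := by
    rw [e, show (2:ℂ) * ↑π * Complex.I * ↑t = ((2*π*t : ℝ) : ℂ) * Complex.I by
      push_cast; ring, Complex.exp_mul_I, Complex.ofReal_cos, Complex.ofReal_sin]
  have hre : (1 - e t).re = 1 - Real.cos (2*π*t) := by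
    rw [he]
    simp only [Complex.sub_re, Complex.one_re, Complex.add_re, Complex.ofReal_re,
      Complex.mul_re, Complex.I_re, Complex.I_im, Complex.ofReal_im]
    ring
  have him : (1 - e t).im = - Real.sin (2*π*t) := by
    rw [he]
    simp only [Complex.sub_im, Complex.one_im, Complex.add_im, Complex.ofReal_im,
      Complex.mul_im, Complex.I_re, Complex.I_im, Complex.ofReal_re]
    ring
  rw [Complex.norm_def, Complex.normSq_apply, hre, him]
  have hsq : (1 - Real.cos (2*π*t)) * (1 - Real.cos (2*π*t)) +
      (- Real.sin (2*π*t)) * (- Real.sin (2*π*t)) = (2 * Real.sin (π*t))^2 := by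
    have h2 : Real.cos (2*π*t) = 2 * Real.cos (π*t)^2 - 1 := by
      rw [show 2*π*t = 2*(π*t) by ring, Real.cos_two_mul]
    nlinarith [Real.sin_sq_add_cos_sq (2*π*t), Real.sin_sq_add_cos_sq (π*t)]
  rw [hsq, Real.sqrt_sq]
  have : 0 ≤ Real.sin (π*t) := Real.sin_nonneg_of_nonneg_of_le_pi (by positivity)
    (by nlinarith [Real.pi_pos])
  linarith

theorem binomial_integral_gamma (p : ℝ) (hp : 0 < p) :
    ∫ t in (0:ℝ)..1, ‖1 - e t‖ ^ p =
      Real.Gamma (p + 1) / Real.Gamma (p / 2 + 1) ^ 2 := by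
  have hstep1 : ∫ t in (0:ℝ)..1, ‖1 - e t‖ ^ p
      = ∫ t in (0:ℝ)..1, (2 * Real.sin (π * t)) ^ p := by
    apply intervalIntegral.integral_congr
    intro t ht
    rw [Set.uIcc_of_le (by norm_num)] at ht
    dsimp only
    rw [abs_one_sub_e ht.1 ht.2]
  have hF : Continuous (fun t : ℝ => (2 * Real.sin (π * t)) ^ p) :=
    (continuous_const.mul
      (Real.continuous_sin.comp (continuous_const.mul continuous_id))).rpow_const
      (fun _ => Or.inr hp.le)
  have hsym : ∫ t in (0:ℝ)..1, (2 * Real.sin (π * t)) ^ p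
      = 2 * ∫ t in (0:ℝ)..(1/2), (2 * Real.sin (π * t)) ^ p := by
    have hadd := intervalIntegral.integral_add_adjacent_intervals
      (a := (0:ℝ)) (b := 1/2) (c := 1)
      (hF.intervalIntegrable (μ := volume) _ _) (hF.intervalIntegrable (μ := volume) _ _)
    have hcs := intervalIntegral.integral_comp_sub_left
      (a := (1/2:ℝ)) (b := 1) (fun t => (2 * Real.sin (π * t)) ^ p) 1
    norm_num at hcs
    have hrefl : ∫ t in (1/2:ℝ)..1, (2 * Real.sin (π * t)) ^ p
        = ∫ t in (1/2:ℝ)..1, (2 * Real.sin (π * (1 - t))) ^ p := by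
      apply intervalIntegral.integral_congr
      intro t _
      dsimp only
      rw [show π * (1 - t) = π - π * t by ring, Real.sin_pi_sub]
    rw [← hadd, hrefl, hcs]
    ring
  have hbeta := beta_value (a := (p-1)/2) (b := -(1:ℝ)/2) (by linarith) (by norm_num)
  have hggval : ∫ x in (0:ℝ)..1, gg p x
      = (2:ℝ)^(p-1)/π * (Real.Gamma ((p+1)/2) * Real.sqrt π / Real.Gamma (p/2+1)) := by
    rw [show (fun x => gg p x) = fun x => (2:ℝ)^(p-1)/π * (x ^ ((p-1)/2) * (1-x) ^ (-(1:ℝ)/2))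
        from rfl]
    rw [intervalIntegral.integral_const_mul, hbeta]
    rw [show (p-1)/2 + 1 = (p+1)/2 by ring, show -(1:ℝ)/2 + 1 = 1/2 by ring,
      show (p-1)/2 + -(1:ℝ)/2 + 2 = p/2 + 1 by ring, Real.Gamma_one_half_eq]
  rw [hstep1, hsym, subst_lemma p hp, hggval]
  have hdup := Real.Gamma_mul_Gamma_add_half ((p+1)/2)
  rw [show (p+1)/2 + 1/2 = p/2 + 1 by ring, show 2 * ((p+1)/2) = p + 1 by ring,
    show (1:ℝ) - (p + 1) = -p by ring] at hdup
  have hΓpos : 0 < Real.Gamma (p/2 + 1) := Real.Gamma_pos_of_pos (by linarith)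
  have hΓ : Real.Gamma ((p+1)/2) = Real.Gamma (p+1) * (2:ℝ)^(-p) * Real.sqrt π
      / Real.Gamma (p/2+1) := by
    field_simp at hdup ⊢
    linarith [hdup]
  rw [hΓ]
  have h2p : (2:ℝ)^(p-1) * (2:ℝ)^(-p) = 1/2 := by
    rw [← Real.rpow_add two_pos, show p - 1 + -p = -1 by ring, Real.rpow_neg_one]
    norm_num
  have hππ : Real.sqrt π * Real.sqrt π = π := Real.mul_self_sqrt Real.pi_pos.le
  have hπ : (π : ℝ) ≠ 0 := Real.pi_ne_zero
  set G := Real.Gamma (p/2+1) with hG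
  set A := Real.Gamma (p+1) with hA
  set s := Real.sqrt π with hs
  set c1 := (2:ℝ)^(p-1) with hc1
  set c2 := (2:ℝ)^(-p) with hc2
  rw [show 2 * (c1 / π * (A * c2 * s / G * s / G)) = 2 * (c1 * c2) * (s * s / π) * (A / G ^ 2)
    by ring, h2p, hππ, div_self hπ]
  norm_num
end

section
/- Let 0 ≤ L < M be integers and let α, β be complex numbers, not both zero. If p > 0, then the L_p norm of αz^L + βz^M over the unit circle satisfies ‖αz^L + βz^M‖_p ≥ max{|α|,|β|} · (1 + (p·min{|α|,|β|}/(2·max{|α|,|β|}))²)^{1/p}. -/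
open MeasureTheory

/-- L_p norm of a polynomial over the unit circle -/
noncomputable def polyLp (p : ℝ) (F : Polynomial ℂ) : ℝ :=
  (∫ t in (0:ℝ)..1, ‖F.eval (e t)‖ ^ p) ^ (1/p)

section BinomAux

open Complex intervalIntegral Filter Topology

noncomputable def EE (k : ℤ) (t : ℝ) : ℂ := Complex.exp (2 * Real.pi * Complex.I * k * t)

lemma EE_abs (k : ℤ) (t : ℝ) : ‖EE k t‖ = 1 := by
  have h : (2 * (Real.pi:ℂ) * Complex.I * k * t) = ((2 * Real.pi * k * t : ℝ) : ℂ) * Complex.I := by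
    push_cast; ring
  rw [EE, h, Complex.norm_exp_ofReal_mul_I]

lemma EE_ne_zero (k : ℤ) (t : ℝ) : EE k t ≠ 0 := Complex.exp_ne_zero _

lemma EE_conj (k : ℤ) (t : ℝ) : (starRingEnd ℂ) (EE k t) = EE (-k) t := by
  rw [EE, EE, ← Complex.exp_conj]
  congr 1
  have : (starRingEnd ℂ) (2 * (Real.pi:ℂ) * Complex.I * ↑k * ↑t) =
      2 * (Real.pi:ℂ) * (-Complex.I) * k * t := by
    simp only [map_mul, Complex.conj_I, Complex.conj_ofReal, map_ofNat, map_intCast]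
  rw [this]; push_cast; ring

lemma EE_mul (k m : ℤ) (t : ℝ) : EE k t * EE m t = EE (k + m) t := by
  rw [EE, EE, EE, ← Complex.exp_add]
  congr 1
  push_cast; ring

lemma EE_cont (k : ℤ) : Continuous (EE k) := by
  apply Complex.continuous_exp.comp
  fun_prop

lemma integral_EE {k : ℤ} (hk : k ≠ 0) : (∫ t in (0:ℝ)..1, EE k t) = 0 := by
  have hc : (2 * (Real.pi:ℂ) * Complex.I * k) ≠ 0 := by
    simp [Real.pi_ne_zero, Complex.I_ne_zero, hk]
  have : (∫ t in (0:ℝ)..1, EE k t) = ∫ t in (0:ℝ)..1, Complex.exp ((2 * (Real.pi:ℂ) * Complex.I * k) * t) := by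
    simp [EE, mul_assoc]
  rw [this, integral_exp_mul_complex hc]
  have h1 : (2 * (Real.pi:ℂ) * Complex.I * k) * (1:ℝ) = k * (2 * Real.pi * Complex.I) := by
    push_cast; ring
  have h0 : (2 * (Real.pi:ℂ) * Complex.I * k) * (0:ℝ) = 0 := by push_cast; ring
  rw [h1, h0, Complex.exp_int_mul_two_pi_mul_I, Complex.exp_zero, sub_self, zero_div]

lemma EE_zero (t : ℝ) : EE 0 t = 1 := by simp [EE]

lemma EE_pow (k : ℤ) (n : ℕ) (t : ℝ) : EE k t ^ n = EE (k * n) t := by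
  rw [EE, EE, ← Complex.exp_nat_mul]
  congr 1
  push_cast; ring

lemma integral_f_mul_EE (f : ℂ → ℂ) (P : FormalMultilinearSeries ℂ ℂ ℂ) {R : NNReal}
    (hps : HasFPowerSeriesOnBall f P 0 R)
    {w : ℂ} (hw : ‖w‖₊ < R) {k : ℤ} (hk : k ≠ 0) (j : ℕ) :
    (∫ t in (0:ℝ)..1, f (w * EE k t) * EE (-k) t ^ j) = P.coeff j * w ^ j := by
  have hnorm : ∀ t, ‖w * EE k t‖₊ = ‖w‖₊ := by
    intro t
    have : ‖w * EE k t‖ = ‖w‖ := by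
      rw [norm_mul, EE_abs, mul_one]
    ext
    simpa [coe_nnnorm] using this
  set F : ℕ → ℝ → ℂ := fun n t => ((w * EE k t) ^ n • P.coeff n) * EE (-k) t ^ j with hF
  have hsum_pt : ∀ t : ℝ, HasSum (fun n => F n t) (f (w * EE k t) * EE (-k) t ^ j) := by
    intro t
    have hy : w * EE k t ∈ Metric.eball (0:ℂ) R := by
      rw [Metric.mem_eball, edist_zero_right, enorm_eq_nnnorm, hnorm t]
      exact ENNReal.coe_lt_coe.2 hw
    have h0 := hps.hasSum hy
    simp only [FormalMultilinearSeries.apply_eq_pow_smul_coeff, zero_add] at h0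
    exact h0.mul_right _
  have hradius : (‖w‖₊ : ENNReal) < P.radius := lt_of_lt_of_le (ENNReal.coe_lt_coe.2 hw) hps.r_le
  have hbsum : Summable fun n => ‖P n‖ * (‖w‖₊:ℝ) ^ n := P.summable_norm_mul_pow hradius
  have hFcont : ∀ n, Continuous (F n) := by
    intro n
    exact (((continuous_const.mul (EE_cont k)).pow n).smul continuous_const).mul
      ((EE_cont (-k)).pow j)
  have key : HasSum (fun n => ∫ t in (0:ℝ)..1, F n t)
      (∫ t in (0:ℝ)..1, f (w * EE k t) * EE (-k) t ^ j) := by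
    apply intervalIntegral.hasSum_integral_of_dominated_convergence (fun n _ => ‖P n‖ * (‖w‖₊:ℝ) ^ n)
    · exact fun n => (hFcont n).aestronglyMeasurable
    · intro n
      filter_upwards with t _
      have : ‖F n t‖ = ‖w‖ ^ n * ‖P.coeff n‖ := by
        rw [hF]
        simp only [norm_mul, norm_smul, norm_pow, norm_mul]
        rw [EE_abs, EE_abs]
        ring
      rw [this, ← FormalMultilinearSeries.norm_apply_eq_norm_coef]
      simp [coe_nnnorm, mul_comm]
    · filter_upwards with t _
      exact hbsum
    · exact intervalIntegrable_const
    · filter_upwards with t _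
      exact hsum_pt t
  have hval : ∀ n, (∫ t in (0:ℝ)..1, F n t) = if n = j then P.coeff j * w ^ j else 0 := by
    intro n
    have hrw : ∀ t : ℝ, F n t = (w ^ n • P.coeff n) * EE (k * n + (-k) * j) t := by
      intro t
      rw [hF]
      simp only
      rw [mul_pow, EE_pow, EE_pow, smul_eq_mul, smul_eq_mul, ← EE_mul]
      ring
    rw [intervalIntegral.integral_congr (fun t _ => hrw t), intervalIntegral.integral_const_mul]
    by_cases hnj : n = j
    · subst hnj
      have h0 : k * (n:ℤ) + (-k) * (n:ℤ) = 0 := by ring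
      rw [h0]
      simp [EE_zero, smul_eq_mul, mul_comm]
    · have hne : k * (n:ℤ) + (-k) * (j:ℤ) ≠ 0 := by
        intro h
        have h2 : k * ((n:ℤ) - (j:ℤ)) = 0 := by linear_combination h
        rcases mul_eq_zero.1 h2 with h3 | h3
        · exact hk h3
        · exact hnj (by exact_mod_cast sub_eq_zero.1 h3)
      rw [integral_EE hne, mul_zero, if_neg hnj]
  have h2 : HasSum (fun n => if n = j then P.coeff j * w ^ j else 0) (P.coeff j * w ^ j) :=
    hasSum_ite_eq j (P.coeff j * w ^ j)
  rw [funext hval] at key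
  exact (h2.unique key).symm

lemma my_integral_conj (f : ℝ → ℂ) :
    (∫ t in (0:ℝ)..1, (starRingEnd ℂ) (f t)) = (starRingEnd ℂ) (∫ t in (0:ℝ)..1, f t) := by
  rw [intervalIntegral.integral_of_le zero_le_one, intervalIntegral.integral_of_le zero_le_one,
    integral_conj]

lemma my_integral_ofReal (f : ℝ → ℝ) :
    (∫ t in (0:ℝ)..1, ((f t : ℝ) : ℂ)) = ((∫ t in (0:ℝ)..1, f t : ℝ) : ℂ) :=
  intervalIntegral.integral_ofReal

lemma bessel (g : ℝ → ℂ) (hg : Continuous g) {k : ℤ} (hk : k ≠ 0) :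
    Complex.normSq (∫ t in (0:ℝ)..1, g t) +
      Complex.normSq (∫ t in (0:ℝ)..1, g t * EE (-k) t) ≤
      ∫ t in (0:ℝ)..1, Complex.normSq (g t) := by
  set A := ∫ t in (0:ℝ)..1, g t with hA
  set B := ∫ t in (0:ℝ)..1, g t * EE (-k) t with hB
  set h : ℝ → ℂ := fun t => g t - A - B * EE k t with hh
  have hcont : Continuous h := (hg.sub continuous_const).sub (continuous_const.mul (EE_cont k))
  have hEk1 : ∀ t : ℝ, EE k t * EE (-k) t = 1 := by
    intro t; rw [EE_mul]; simp [EE_zero]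
  -- basic integrals
  have ig : IntervalIntegrable g volume 0 1 := hg.intervalIntegrable 0 1
  have igE : IntervalIntegrable (fun t => g t * EE (-k) t) volume 0 1 :=
    (hg.mul (EE_cont (-k))).intervalIntegrable 0 1
  have iconst : ∀ c : ℂ, IntervalIntegrable (fun _ : ℝ => c) volume 0 1 := fun c =>
    intervalIntegrable_const
  have icE : ∀ (c : ℂ) (m : ℤ), IntervalIntegrable (fun t => c * EE m t) volume 0 1 := fun c m =>
    (continuous_const.mul (EE_cont m)).intervalIntegrable 0 1
  have i1 : (∫ t in (0:ℝ)..1, h t) = 0 := by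
    rw [hh]
    simp only
    rw [intervalIntegral.integral_sub (ig.sub (iconst A)) (icE B k),
      intervalIntegral.integral_sub ig (iconst A),
      intervalIntegral.integral_const_mul, integral_EE hk, intervalIntegral.integral_const]
    simp [← hA]
  have i2 : (∫ t in (0:ℝ)..1, h t * EE (-k) t) = 0 := by
    have hrw : ∀ t : ℝ, h t * EE (-k) t = g t * EE (-k) t - A * EE (-k) t - (fun _ => B) t := by
      intro t
      have h1 : B * EE k t * EE (-k) t = B := by rw [mul_assoc, hEk1 t, mul_one]
      rw [hh]
      simp only
      calc (g t - A - B * EE k t) * EE (-k) t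
          = g t * EE (-k) t - A * EE (-k) t - B * EE k t * EE (-k) t := by ring
        _ = g t * EE (-k) t - A * EE (-k) t - B := by rw [h1]
    rw [intervalIntegral.integral_congr (fun t _ => hrw t),
      intervalIntegral.integral_sub ((igE.sub (icE A (-k)))) (iconst B),
      intervalIntegral.integral_sub igE (icE A (-k)),
      intervalIntegral.integral_const_mul, integral_EE (neg_ne_zero.2 hk),
      intervalIntegral.integral_const]
    simp [← hB]
  have i3 : (∫ t in (0:ℝ)..1, h t * (starRingEnd ℂ) (g t)) =
      (∫ t in (0:ℝ)..1, g t * (starRingEnd ℂ) (g t)) -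
        A * (starRingEnd ℂ) A - B * (starRingEnd ℂ) B := by
    have hrw : ∀ t : ℝ, h t * (starRingEnd ℂ) (g t) =
        g t * (starRingEnd ℂ) (g t) - A * (starRingEnd ℂ) (g t) -
          B * (starRingEnd ℂ) (g t * EE (-k) t) := by
      intro t
      rw [hh]
      simp only [map_mul, EE_conj, neg_neg]
      ring
    have icg : Continuous fun t => (starRingEnd ℂ) (g t) := Complex.continuous_conj.comp hg
    have icgE : Continuous fun t => (starRingEnd ℂ) (g t * EE (-k) t) :=
      Complex.continuous_conj.comp (hg.mul (EE_cont (-k)))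
    rw [intervalIntegral.integral_congr (fun t _ => hrw t),
      intervalIntegral.integral_sub (f := fun t => g t * (starRingEnd ℂ) (g t) - A * (starRingEnd ℂ) (g t)) (g := fun t => B * (starRingEnd ℂ) (g t * EE (-k) t))
        (((hg.mul icg).intervalIntegrable 0 1).sub ((continuous_const.mul icg).intervalIntegrable 0 1))
        ((continuous_const.mul icgE).intervalIntegrable 0 1),
      intervalIntegral.integral_sub (f := fun t => g t * (starRingEnd ℂ) (g t)) (g := fun t => A * (starRingEnd ℂ) (g t)) ((hg.mul icg).intervalIntegrable 0 1)
        ((continuous_const.mul icg).intervalIntegrable 0 1),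
      intervalIntegral.integral_const_mul, intervalIntegral.integral_const_mul,
      my_integral_conj, my_integral_conj, ← hA, ← hB]
  have main : (∫ t in (0:ℝ)..1, h t * (starRingEnd ℂ) (h t)) =
      (∫ t in (0:ℝ)..1, g t * (starRingEnd ℂ) (g t)) -
        A * (starRingEnd ℂ) A - B * (starRingEnd ℂ) B := by
    have hrw : ∀ t : ℝ, h t * (starRingEnd ℂ) (h t) =
        h t * (starRingEnd ℂ) (g t) - (starRingEnd ℂ) A * h t -
          (starRingEnd ℂ) B * (h t * EE (-k) t) := by
      intro t
      conv_lhs => rw [hh]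
      simp only [map_sub, map_mul, EE_conj]
      ring
    have ihcg : IntervalIntegrable (fun t => h t * (starRingEnd ℂ) (g t)) volume 0 1 :=
      (hcont.mul (Complex.continuous_conj.comp hg)).intervalIntegrable 0 1
    have ih1 : IntervalIntegrable (fun t => (starRingEnd ℂ) A * h t) volume 0 1 :=
      (continuous_const.mul hcont).intervalIntegrable 0 1
    have ih2 : IntervalIntegrable (fun t => (starRingEnd ℂ) B * (h t * EE (-k) t)) volume 0 1 :=
      (continuous_const.mul (hcont.mul (EE_cont (-k)))).intervalIntegrable 0 1
    rw [intervalIntegral.integral_congr (fun t _ => hrw t),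
      intervalIntegral.integral_sub (ihcg.sub ih1) ih2,
      intervalIntegral.integral_sub ihcg ih1,
      intervalIntegral.integral_const_mul, intervalIntegral.integral_const_mul, i1, i2, i3]
    ring
  -- pass to real parts
  have hofg : (∫ t in (0:ℝ)..1, g t * (starRingEnd ℂ) (g t)) =
      ((∫ t in (0:ℝ)..1, Complex.normSq (g t) : ℝ) : ℂ) := by
    rw [← my_integral_ofReal]
    exact intervalIntegral.integral_congr fun t _ => (Complex.mul_conj (g t))
  have hofh : (∫ t in (0:ℝ)..1, h t * (starRingEnd ℂ) (h t)) =
      ((∫ t in (0:ℝ)..1, Complex.normSq (h t) : ℝ) : ℂ) := by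
    rw [← my_integral_ofReal]
    exact intervalIntegral.integral_congr fun t _ => (Complex.mul_conj (h t))
  rw [hofg, hofh, Complex.mul_conj, Complex.mul_conj] at main
  have hre : (∫ t in (0:ℝ)..1, Complex.normSq (h t)) =
      (∫ t in (0:ℝ)..1, Complex.normSq (g t)) - Complex.normSq A - Complex.normSq B := by
    exact_mod_cast main
  have hpos : 0 ≤ ∫ t in (0:ℝ)..1, Complex.normSq (h t) :=
    intervalIntegral.integral_nonneg zero_le_one fun t _ => Complex.normSq_nonneg _
  linarith

lemma re_pos_of_abs_lt_one {z : ℂ} (hz : ‖z‖ < 1) : 0 < (1 + z).re := by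
  have h1 : |z.re| ≤ ‖z‖ := Complex.abs_re_le_norm z
  have h2 : -1 < z.re := by
    have := neg_abs_le z.re
    linarith
  simp only [Complex.add_re, Complex.one_re]
  linarith

lemma core_lt (p : ℝ) (w : ℂ) (hw : ‖w‖ < 1) {k : ℤ} (hk : k ≠ 0) :
    1 + (p * ‖w‖ / 2) ^ 2 ≤
      ∫ t in (0:ℝ)..1, (‖1 + w * EE k t‖) ^ p := by
  set c : ℂ := ((p/2 : ℝ) : ℂ) with hc
  set f : ℂ → ℂ := fun z => (1 + z) ^ c with hf
  have habs0 : 0 ≤ ‖w‖ := norm_nonneg w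
  set R : NNReal := ⟨(1 + ‖w‖)/2, by positivity⟩ with hR
  have hRcoe : (R : ℝ) = (1 + ‖w‖)/2 := rfl
  have hRlt : (R : ℝ) < 1 := by rw [hRcoe]; linarith
  have hRpos : 0 < R := by rw [← NNReal.coe_pos, hRcoe]; linarith
  have hwR : ‖w‖₊ < R := by
    rw [← NNReal.coe_lt_coe, coe_nnnorm, hRcoe]
    linarith
  have hderiv : ∀ z : ℂ, ‖z‖ < 1 →
      HasDerivAt f (c * (1 + z) ^ (c - 1)) z := by
    intro z hz
    have hslit : (1 : ℂ) + z ∈ Complex.slitPlane := by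
      rw [Complex.mem_slitPlane_iff]
      exact Or.inl (re_pos_of_abs_lt_one hz)
    have := ((hasDerivAt_id z).const_add (1:ℂ)).cpow_const (c := c) hslit
    simpa using this
  have hdiff : DifferentiableOn ℂ f (Metric.closedBall 0 R) := by
    intro z hz
    rw [Metric.mem_closedBall, dist_zero_right] at hz
    have : ‖z‖ < 1 := lt_of_le_of_lt hz hRlt
    exact ((hderiv z this).differentiableAt).differentiableWithinAt
  have hps := hdiff.hasFPowerSeriesOnBall hRpos
  set P := cauchyPowerSeries f 0 R with hP
  have coeff0 : P.coeff 0 = 1 := by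
    have h := hps.coeff_zero fun _ => (1:ℂ)
    have hf0 : f 0 = 1 := by simp [hf, Complex.one_cpow]
    rw [← hf0]
    exact h
  have coeff1 : P.coeff 1 = c := by
    have h1 : deriv f 0 = P 1 fun _ => 1 := hps.hasFPowerSeriesAt.deriv
    have h2 : deriv f 0 = c * (1 + 0) ^ (c - 1) := (hderiv 0 (by simp)).deriv
    have h3 : c * ((1:ℂ) + 0) ^ (c - 1) = c := by simp [Complex.one_cpow]
    have h4 : P.coeff 1 = deriv f 0 := h1.symm
    rw [h4, h2, h3]
  set g : ℝ → ℂ := fun t => f (w * EE k t) with hg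
  have hgcont : Continuous g := by
    rw [continuous_iff_continuousAt]
    intro t
    apply ContinuousAt.cpow
    · exact (continuous_const.add (continuous_const.mul (EE_cont k))).continuousAt
    · exact continuousAt_const
    · apply Or.inl
      apply re_pos_of_abs_lt_one
      rw [norm_mul, EE_abs, mul_one]
      exact hw
  have hA : (∫ t in (0:ℝ)..1, g t) = 1 := by
    have h := integral_f_mul_EE f P hps hwR hk 0
    simp only [pow_zero, mul_one, coeff0] at h
    exact h
  have hB : (∫ t in (0:ℝ)..1, g t * EE (-k) t) = c * w := by
    have h := integral_f_mul_EE f P hps hwR hk 1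
    simp only [pow_one, coeff1] at h
    exact h
  have hbes := bessel g hgcont hk
  rw [hA, hB] at hbes
  have heq : (∫ t in (0:ℝ)..1, Complex.normSq (g t)) =
      ∫ t in (0:ℝ)..1, (‖1 + w * EE k t‖) ^ p := by
    apply intervalIntegral.integral_congr
    intro t _
    show Complex.normSq (g t) = ‖1 + w * EE k t‖ ^ p
    have hlt : ‖w * EE k t‖ < 1 := by rw [norm_mul, EE_abs, mul_one]; exact hw
    have hrepos := re_pos_of_abs_lt_one hlt
    have hb0 : (0:ℝ) < ‖1 + w * EE k t‖ := by
      apply norm_pos_iff.2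
      intro h0
      rw [h0] at hrepos
      simp at hrepos
    have h1 : ‖g t‖ = ‖1 + w * EE k t‖ ^ (p/2 : ℝ) := by
      rw [hg]
      simp only [hf]
      exact Complex.norm_cpow_real _ _
    rw [Complex.normSq_eq_norm_sq, h1, ← Real.rpow_natCast (‖1 + w * EE k t‖ ^ (p/2:ℝ)) 2,
      ← Real.rpow_mul hb0.le]
    norm_num
  rw [heq] at hbes
  have hnsq : Complex.normSq (1:ℂ) + Complex.normSq (c * w) = 1 + (p * ‖w‖ / 2) ^ 2 := by
    rw [Complex.normSq_mul, Complex.normSq_one, hc, Complex.normSq_ofReal, Complex.normSq_eq_norm_sq]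
    ring
  linarith [hbes, hnsq.symm.le]

lemma core_le (p : ℝ) (hp : 0 < p) (w : ℂ) (hw : ‖w‖ ≤ 1) {k : ℤ} (hk : k ≠ 0) :
    1 + (p * ‖w‖ / 2) ^ 2 ≤
      ∫ t in (0:ℝ)..1, (‖1 + w * EE k t‖) ^ p := by
  set s : ℕ → ℝ := fun n => (n:ℝ)/((n:ℝ)+1) with hs
  have hs0 : ∀ n, 0 ≤ s n := fun n => by positivity
  have hs1 : ∀ n, s n < 1 := fun n => by
    rw [hs, div_lt_one (by positivity)]; linarith
  have hslim : Tendsto s atTop (𝓝 1) := tendsto_natCast_div_add_atTop (1:ℝ)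
  have habsn : ∀ n, ‖((s n : ℝ):ℂ) * w‖ = s n * ‖w‖ := by
    intro n
    rw [norm_mul, Complex.norm_real, Real.norm_eq_abs, _root_.abs_of_nonneg (hs0 n)]
  have habslt : ∀ n, ‖((s n : ℝ):ℂ) * w‖ < 1 := by
    intro n
    rw [habsn]
    calc s n * ‖w‖ ≤ s n * 1 := by
          apply mul_le_mul_of_nonneg_left hw (hs0 n)
      _ < 1 := by rw [mul_one]; exact hs1 n
  set F : ℕ → ℝ → ℝ := fun n t => (‖1 + ((s n : ℝ):ℂ) * w * EE k t‖) ^ p with hF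
  have hcontbase : ∀ (c : ℂ), Continuous fun t => ‖1 + c * EE k t‖ :=
    fun c => continuous_norm.comp (continuous_const.add (continuous_const.mul (EE_cont k)))
  have hlow : ∀ n, 1 + (p * (s n * ‖w‖) / 2) ^ 2 ≤ ∫ t in (0:ℝ)..1, F n t := by
    intro n
    have := core_lt p (((s n : ℝ):ℂ) * w) (habslt n) hk
    rw [habsn] at this
    simpa [hF, mul_assoc] using this
  have htend : Tendsto (fun n => ∫ t in (0:ℝ)..1, F n t) atTop
      (𝓝 (∫ t in (0:ℝ)..1, (‖1 + w * EE k t‖) ^ p)) := by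
    apply intervalIntegral.tendsto_integral_filter_of_dominated_convergence
      (fun _ => (2:ℝ) ^ p)
    · filter_upwards with n
      exact (((hcontbase _).measurable).pow_const p).aestronglyMeasurable
    · filter_upwards with n
      filter_upwards with t _
      have hb : ‖1 + ((s n : ℝ):ℂ) * w * EE k t‖ ≤ 2 := by
        calc ‖1 + ((s n : ℝ):ℂ) * w * EE k t‖
            ≤ ‖1‖ + ‖((s n : ℝ):ℂ) * w * EE k t‖ := norm_add_le _ _
          _ ≤ 1 + 1 := by
              have h9 : ‖((s n:ℝ):ℂ) * w * EE k t‖ ≤ 1 := by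
                rw [norm_mul, EE_abs, mul_one]
                exact le_of_lt (habslt n)
              have h8 : ‖(1:ℂ)‖ = 1 := by simp
              rw [h8]
              linarith
          _ = 2 := by norm_num
      rw [Real.norm_eq_abs, _root_.abs_of_nonneg (Real.rpow_nonneg (norm_nonneg _) p)]
      exact Real.rpow_le_rpow (norm_nonneg _) hb hp.le
    · exact intervalIntegrable_const
    · filter_upwards with t _
      have h1 : Tendsto (fun n => ‖1 + ((s n : ℝ):ℂ) * w * EE k t‖) atTop
          (𝓝 (‖1 + w * EE k t‖)) := by
        apply (continuous_norm.tendsto _).comp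
        have : Tendsto (fun n => (((s n : ℝ):ℂ))) atTop (𝓝 1) := by
          have := (Complex.continuous_ofReal.tendsto 1).comp hslim
          simpa [Function.comp_def] using this
        have h2 := (this.mul_const (w * EE k t)).const_add (1:ℂ)
        simpa [mul_assoc] using h2
      have h2 : ContinuousAt (fun x : ℝ => x ^ p) (‖1 + w * EE k t‖) :=
        Real.continuousAt_rpow_const _ p (Or.inr hp.le)
      exact h2.tendsto.comp h1
  have hrhs : Tendsto (fun n => 1 + (p * (s n * ‖w‖) / 2) ^ 2) atTop
      (𝓝 (1 + (p * ‖w‖ / 2) ^ 2)) := by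
    have h1 : Tendsto (fun n => s n * ‖w‖) atTop (𝓝 (‖w‖)) := by
      simpa using hslim.mul_const (‖w‖)
    have h2 := (((h1.const_mul p).div_const 2).pow 2).const_add 1
    simpa using h2
  exact le_of_tendsto_of_tendsto' hrhs htend hlow

lemma main_int (α β : ℂ) (hβα : ‖β‖ ≤ ‖α‖) (hα : α ≠ 0)
    (p : ℝ) (hp : 0 < p) {k : ℤ} (hk : k ≠ 0) :
    (‖α‖) ^ p * (1 + (p * (‖β‖ / ‖α‖) / 2) ^ 2) ≤
      ∫ t in (0:ℝ)..1, (‖α + β * EE k t‖) ^ p := by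
  have ha : 0 < ‖α‖ := norm_pos_iff.2 hα
  have hrw : ∀ t : ℝ, (‖α + β * EE k t‖) ^ p =
      (‖α‖) ^ p * (‖1 + (β/α) * EE k t‖) ^ p := by
    intro t
    have h1 : α + β * EE k t = α * (1 + (β/α) * EE k t) := by
      field_simp
    rw [h1, norm_mul, Real.mul_rpow (norm_nonneg _) (norm_nonneg _)]
  rw [intervalIntegral.integral_congr (fun t _ => hrw t), intervalIntegral.integral_const_mul]
  apply mul_le_mul_of_nonneg_left _ (Real.rpow_nonneg ha.le p)
  have hwle : ‖β/α‖ ≤ 1 := by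
    rw [norm_div, div_le_one ha]
    exact hβα
  have := core_le p hp (β/α) hwle hk
  rwa [norm_div] at this
  
lemma swap_abs (α β : ℂ) (k : ℤ) (t : ℝ) :
    ‖α + β * EE k t‖ =
      ‖(starRingEnd ℂ) β + (starRingEnd ℂ) α * EE k t‖ := by
  have h1 : (starRingEnd ℂ) β + (starRingEnd ℂ) α * EE k t =
      (starRingEnd ℂ) (β + α * EE (-k) t) := by
    rw [map_add, map_mul, EE_conj, neg_neg]
  have h2 : β + α * EE (-k) t = EE (-k) t * (α + β * EE k t) := by
    have h3 : EE (-k) t * EE k t = 1 := by rw [EE_mul]; simp [EE_zero]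
    calc β + α * EE (-k) t = α * EE (-k) t + β * 1 := by ring
      _ = α * EE (-k) t + β * (EE (-k) t * EE k t) := by rw [h3]
      _ = EE (-k) t * (α + β * EE k t) := by ring
  rw [h1, Complex.norm_conj, h2, norm_mul, EE_abs, one_mul]

theorem binomial_Lp_lower_bound_one (L M : ℕ) (hLM : L < M) (α β : ℂ)
    (hαβ : ¬(α = 0 ∧ β = 0)) (p : ℝ) (hp : 0 < p) :
    polyLp p (Polynomial.C α * Polynomial.X ^ L + Polynomial.C β * Polynomial.X ^ M) ≥
      max ‖α‖ ‖β‖ *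
        (1 + (p * min ‖α‖ ‖β‖ /
          (2 * max ‖α‖ ‖β‖)) ^ 2) ^ (1/p) := by
  set k : ℤ := ((M - L : ℕ) : ℤ) with hkdef
  have hk : k ≠ 0 := by
    rw [hkdef]
    simp only [ne_eq, Nat.cast_eq_zero]
    omega
  have he1 : ∀ t : ℝ, e t = EE 1 t := by
    intro t
    rw [e, EE]
    norm_num
  have heval : ∀ t : ℝ, 
      ‖(Polynomial.C α * Polynomial.X ^ L + Polynomial.C β * Polynomial.X ^ M).eval (e t)‖ =
      ‖α + β * EE k t‖ := by
    intro t
    have hev : (Polynomial.C α * Polynomial.X ^ L + Polynomial.C β * Polynomial.X ^ M).eval (e t)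
        = α * (e t) ^ L + β * (e t) ^ M := by
      simp [Polynomial.eval_add, Polynomial.eval_mul, Polynomial.eval_pow]
    have hsplit : (e t) ^ M = (e t) ^ L * (e t) ^ (M - L) := by
      rw [← pow_add]
      congr 1
      omega
    have hfact : α * (e t) ^ L + β * (e t) ^ M = (e t) ^ L * (α + β * (e t) ^ (M - L)) := by
      rw [hsplit]; ring
    have hEk : (e t) ^ (M - L) = EE k t := by
      rw [he1, EE_pow, hkdef]
      norm_num
    rw [hev, hfact, norm_mul, hEk, norm_pow, he1, EE_abs, one_pow, one_mul]
  set a := max (‖α‖) (‖β‖) with hadef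
  set b := min (‖α‖) (‖β‖) with hbdef
  have key : a ^ p * (1 + (p * (b / a) / 2) ^ 2) ≤
      ∫ t in (0:ℝ)..1, 
        ‖(Polynomial.C α * Polynomial.X ^ L + Polynomial.C β * Polynomial.X ^ M).eval (e t)‖ ^ p := by
    rw [intervalIntegral.integral_congr (fun t _ => by rw [heval t])]
    rcases le_total (‖β‖) (‖α‖) with hc | hc
    · have hα : α ≠ 0 := by
        intro h0
        apply hαβ
        refine ⟨h0, ?_⟩
        rw [h0] at hc
        simp at hc
        exact hc
      rw [hadef, hbdef, max_eq_left hc, min_eq_right hc]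
      exact main_int α β hc hα p hp hk
    · have hβ : β ≠ 0 := by
        intro h0
        apply hαβ
        refine ⟨?_, h0⟩
        rw [h0] at hc
        simp at hc
        exact hc
      rw [intervalIntegral.integral_congr (fun t _ => by rw [swap_abs α β k t])]
      have h2 := main_int ((starRingEnd ℂ) β) ((starRingEnd ℂ) α)
        (by rwa [Complex.norm_conj, Complex.norm_conj]) (by simpa using hβ) p hp hk
      rw [Complex.norm_conj, Complex.norm_conj] at h2
      rw [hadef, hbdef, max_eq_right hc, min_eq_left hc]
      exact h2
  have ha : 0 < a := by
    rcases (not_and_or.1 hαβ) with h | h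
    · exact lt_max_of_lt_left (norm_pos_iff.2 h)
    · exact lt_max_of_lt_right (norm_pos_iff.2 h)
  have hb : 0 ≤ b := le_min (norm_nonneg _) (norm_nonneg _)
  have hfrac : p * (b / a) / 2 = p * b / (2 * a) := by
    field_simp
  rw [polyLp, ge_iff_le]
  have hX : (0:ℝ) ≤ 1 + (p * b / (2 * a)) ^ 2 := by positivity
  have h3 : a ^ p * (1 + (p * b / (2 * a)) ^ 2) ≤
      ∫ t in (0:ℝ)..1, 
        ‖(Polynomial.C α * Polynomial.X ^ L + Polynomial.C β * Polynomial.X ^ M).eval (e t)‖ ^ p := by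
    rw [← hfrac]
    exact key
  have h4 := Real.rpow_le_rpow (by positivity) h3 (by positivity : (0:ℝ) ≤ 1/p)
  rw [Real.mul_rpow (Real.rpow_nonneg ha.le p) hX, ← Real.rpow_mul ha.le,
    mul_one_div_cancel hp.ne', Real.rpow_one] at h4
  exact h4

end BinomAux
end

section
/- Let 0 ≤ L < M be integers and let α, β be complex numbers. If 0 < p ≤ 2, then ‖αz^L + βz^M‖_p ≥ B_p · (|α|^p + |β|^p)^{1/p}, where B_p = ((1/2)∫₀¹ |1 - e(t)|^p dt)^{1/p}. -/
open MeasureTheory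

/-- B_p = ((1/2)∫₀¹ |1 - e(t)|^p dt)^{1/p} -/
noncomputable def Bp (p : ℝ) : ℝ :=
  ((1/2) * ∫ t in (0:ℝ)..1, ‖1 - e t‖ ^ p) ^ (1/p)

/-! ### Auxiliary real inequalities -/

lemma maj (q s d d' : ℝ) (hq0 : 0 < q) (hq1 : q ≤ 1) (hd : 0 ≤ d) (hdd' : d ≤ d')
    (hds : d' ≤ s) : (s + d') ^ q + (s - d') ^ q ≤ (s + d) ^ q + (s - d) ^ q := by
  rcases eq_or_lt_of_le (hd.trans hdd') with h0 | h0
  · have hd0 : d = 0 := le_antisymm (h0 ▸ hdd') hd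
    rw [hd0, ← h0]
  · have hcon := Real.concaveOn_rpow hq0.le hq1
    set lam := (d' - d) / (2 * d') with hlam
    set mu := (d' + d) / (2 * d') with hmu
    have hlam0 : 0 ≤ lam := div_nonneg (by linarith) (by linarith)
    have hmu0 : 0 ≤ mu := div_nonneg (by linarith) (by linarith)
    have hsum : lam + mu = 1 := by
      rw [hlam, hmu, ← add_div, div_eq_one_iff_eq (mul_pos two_pos h0).ne']; ring
    have hx : (s - d' : ℝ) ∈ Set.Ici (0:ℝ) := by simp; linarith
    have hy : (s + d' : ℝ) ∈ Set.Ici (0:ℝ) := by simp; linarith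
    have h1 := hcon.2 hx hy hlam0 hmu0 hsum
    have h2 := hcon.2 hx hy hmu0 hlam0 (by linarith)
    simp only [smul_eq_mul] at h1 h2
    have hml : d' * (mu - lam) = d := by
      rw [hmu, hlam, div_sub_div_same, mul_div_assoc', div_eq_iff (mul_pos two_pos h0).ne']; ring
    have e1 : lam * (s - d') + mu * (s + d') = s + d := by linear_combination s * hsum + hml
    have e2 : mu * (s - d') + lam * (s + d') = s - d := by linear_combination s * hsum - hml
    rw [e1] at h1; rw [e2] at h2
    have h3 : (s + d') ^ q + (s - d') ^ q =
        lam * (s - d') ^ q + mu * (s + d') ^ q + (mu * (s - d') ^ q + lam * (s + d') ^ q) := by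
      linear_combination ((s - d') ^ q + (s + d') ^ q) * hsum.symm
    linarith [h1, h2]

lemma key0 (q a b c : ℝ) (hq0 : 0 < q) (hq1 : q ≤ 1) (ha : 0 ≤ a) (hb : 0 ≤ b)
    (hc0 : 0 ≤ c) (hc1 : c ≤ 1) :
    ((a ^ 2) ^ q + (b ^ 2) ^ q) * ((2 + 2 * c) ^ q + (2 - 2 * c) ^ q) / 2
      ≤ (a ^ 2 + b ^ 2 + 2 * a * b * c) ^ q + (a ^ 2 + b ^ 2 - 2 * a * b * c) ^ q := by
  have hS : (0:ℝ) ≤ a ^ 2 + b ^ 2 := by positivity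
  have step1 : ((a ^ 2 + b ^ 2) * (1 + c)) ^ q + ((a ^ 2 + b ^ 2) * (1 - c)) ^ q
      ≤ (a ^ 2 + b ^ 2 + 2 * a * b * c) ^ q + (a ^ 2 + b ^ 2 - 2 * a * b * c) ^ q := by
    have := maj q (a ^ 2 + b ^ 2) (2 * a * b * c) ((a ^ 2 + b ^ 2) * c) hq0 hq1
      (by positivity) (by nlinarith [sq_nonneg (a - b)]) (by nlinarith)
    calc ((a ^ 2 + b ^ 2) * (1 + c)) ^ q + ((a ^ 2 + b ^ 2) * (1 - c)) ^ q
        = (a ^ 2 + b ^ 2 + (a ^ 2 + b ^ 2) * c) ^ q + (a ^ 2 + b ^ 2 - (a ^ 2 + b ^ 2) * c) ^ q := by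
          ring_nf
      _ ≤ _ := this
  have step2 : (a ^ 2) ^ q + (b ^ 2) ^ q ≤ 2 * ((a ^ 2 + b ^ 2) / 2) ^ q := by
    rcases le_total (b ^ 2) (a ^ 2) with h | h
    · have := maj q ((a ^ 2 + b ^ 2) / 2) 0 ((a ^ 2 - b ^ 2) / 2) hq0 hq1 le_rfl
        (by linarith) (by nlinarith [sq_nonneg a, sq_nonneg b])
      calc (a ^ 2) ^ q + (b ^ 2) ^ q
          = ((a ^ 2 + b ^ 2) / 2 + (a ^ 2 - b ^ 2) / 2) ^ q
            + ((a ^ 2 + b ^ 2) / 2 - (a ^ 2 - b ^ 2) / 2) ^ q := by ring_nf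
        _ ≤ ((a ^ 2 + b ^ 2) / 2 + 0) ^ q + ((a ^ 2 + b ^ 2) / 2 - 0) ^ q := this
        _ = 2 * ((a ^ 2 + b ^ 2) / 2) ^ q := by ring_nf
    · have := maj q ((a ^ 2 + b ^ 2) / 2) 0 ((b ^ 2 - a ^ 2) / 2) hq0 hq1 le_rfl
        (by linarith) (by nlinarith [sq_nonneg a, sq_nonneg b])
      calc (a ^ 2) ^ q + (b ^ 2) ^ q
          = ((a ^ 2 + b ^ 2) / 2 + (b ^ 2 - a ^ 2) / 2) ^ q
            + ((a ^ 2 + b ^ 2) / 2 - (b ^ 2 - a ^ 2) / 2) ^ q := by ring_nf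
        _ ≤ ((a ^ 2 + b ^ 2) / 2 + 0) ^ q + ((a ^ 2 + b ^ 2) / 2 - 0) ^ q := this
        _ = 2 * ((a ^ 2 + b ^ 2) / 2) ^ q := by ring_nf
  have e1 : ((a ^ 2 + b ^ 2) * (1 + c)) ^ q = (a ^ 2 + b ^ 2) ^ q * (1 + c) ^ q :=
    Real.mul_rpow hS (by linarith)
  have e2 : ((a ^ 2 + b ^ 2) * (1 - c)) ^ q = (a ^ 2 + b ^ 2) ^ q * (1 - c) ^ q :=
    Real.mul_rpow hS (by linarith)
  have e3 : (2 + 2 * c) ^ q = 2 ^ q * (1 + c) ^ q := by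
    rw [show (2 + 2 * c : ℝ) = 2 * (1 + c) by ring, Real.mul_rpow (by norm_num) (by linarith)]
  have e4 : (2 - 2 * c) ^ q = 2 ^ q * (1 - c) ^ q := by
    rw [show (2 - 2 * c : ℝ) = 2 * (1 - c) by ring, Real.mul_rpow (by norm_num) (by linarith)]
  have e5 : ((a ^ 2 + b ^ 2) / 2) ^ q = (a ^ 2 + b ^ 2) ^ q / 2 ^ q :=
    Real.div_rpow hS (by norm_num) q
  have h2q : (0:ℝ) < 2 ^ q := Real.rpow_pos_of_pos (by norm_num) q
  have hphi1 : (0:ℝ) ≤ (1 + c) ^ q := Real.rpow_nonneg (by linarith) q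
  have hphi2 : (0:ℝ) ≤ (1 - c) ^ q := Real.rpow_nonneg (by linarith) q
  calc ((a ^ 2) ^ q + (b ^ 2) ^ q) * ((2 + 2 * c) ^ q + (2 - 2 * c) ^ q) / 2
      = ((a ^ 2) ^ q + (b ^ 2) ^ q) * (2 ^ q * ((1 + c) ^ q + (1 - c) ^ q)) / 2 := by
        rw [e3, e4]; ring
    _ ≤ (2 * ((a ^ 2 + b ^ 2) / 2) ^ q) * (2 ^ q * ((1 + c) ^ q + (1 - c) ^ q)) / 2 := by
        have hF : (0:ℝ) ≤ 2 ^ q * ((1 + c) ^ q + (1 - c) ^ q) :=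
          mul_nonneg h2q.le (add_nonneg hphi1 hphi2)
        have := mul_le_mul_of_nonneg_right step2 hF
        linarith
    _ = (a ^ 2 + b ^ 2) ^ q * ((1 + c) ^ q + (1 - c) ^ q) := by
        rw [e5]; field_simp
    _ = ((a ^ 2 + b ^ 2) * (1 + c)) ^ q + ((a ^ 2 + b ^ 2) * (1 - c)) ^ q := by
        rw [e1, e2]; ring
    _ ≤ _ := step1

lemma key_s8 (q a b c : ℝ) (hq0 : 0 < q) (hq1 : q ≤ 1) (ha : 0 ≤ a) (hb : 0 ≤ b)
    (hc0 : -1 ≤ c) (hc1 : c ≤ 1) :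
    ((a ^ 2) ^ q + (b ^ 2) ^ q) * ((2 + 2 * c) ^ q + (2 - 2 * c) ^ q) / 2
      ≤ (a ^ 2 + b ^ 2 + 2 * a * b * c) ^ q + (a ^ 2 + b ^ 2 - 2 * a * b * c) ^ q := by
  rcases le_total 0 c with h | h
  · exact key0 q a b c hq0 hq1 ha hb h hc1
  · have := key0 q a b (-c) hq0 hq1 ha hb (by linarith) (by linarith)
    rw [show (2 + 2 * -c : ℝ) = 2 - 2 * c by ring, show (2 - 2 * -c : ℝ) = 2 + 2 * c by ring,
      show (a ^ 2 + b ^ 2 + 2 * a * b * -c : ℝ) = a ^ 2 + b ^ 2 - 2 * a * b * c by ring,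
      show (a ^ 2 + b ^ 2 - 2 * a * b * -c : ℝ) = a ^ 2 + b ^ 2 + 2 * a * b * c by ring] at this
    linarith

/-! ### Integral helper lemmas -/

lemma shift_int (g : ℝ → ℝ) (hper : Function.Periodic g 1) (c : ℝ) :
    ∫ t in (0:ℝ)..1, g (t + c) = ∫ t in (0:ℝ)..1, g t := by
  rw [intervalIntegral.integral_comp_add_right g c]
  have h := hper.intervalIntegral_add_eq c 0
  simpa [add_comm] using h

lemma stretch_int (g : ℝ → ℝ) (hg : Continuous g) (hper : Function.Periodic g 1)
    (k : ℕ) (hk : 0 < k) :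
    ∫ t in (0:ℝ)..1, g ((k:ℝ) * t) = ∫ t in (0:ℝ)..1, g t := by
  have h_int : ∀ t₁ t₂ : ℝ, IntervalIntegrable g MeasureSpace.volume t₁ t₂ := fun t₁ t₂ =>
    hg.intervalIntegrable t₁ t₂
  have hk0 : (k:ℝ) ≠ 0 := Nat.cast_ne_zero.2 hk.ne'
  rw [intervalIntegral.integral_comp_mul_left g hk0]
  have h2 := hper.intervalIntegral_add_zsmul_eq (k : ℤ) 0 h_int
  simp only [zero_add, smul_eq_mul, zsmul_eq_mul, Int.cast_natCast] at h2
  simp only [mul_one] at h2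
  rw [mul_zero, mul_one, h2, smul_eq_mul]
  field_simp

/-! ### Pointwise computations with `e` -/

lemma e_per : Function.Periodic e 1 := by
  intro t
  unfold e
  push_cast
  rw [mul_add, Complex.exp_add, mul_one, Complex.exp_two_pi_mul_I, mul_one]

lemma e_pow (n : ℕ) (t : ℝ) : (e t) ^ n = e ((n:ℝ) * t) := by
  unfold e
  rw [← Complex.exp_nat_mul]
  congr 1
  push_cast
  ring

lemma conj_e (s : ℝ) : (starRingEnd ℂ) (e s) = e (-s) := by
  unfold e
  rw [← Complex.exp_conj]
  congr 1
  push_cast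
  simp only [map_mul, Complex.conj_I, map_ofNat, Complex.conj_ofReal]
  ring

lemma point (α β : ℂ) (p : ℝ) (s : ℝ) :
    ‖α + β * e s‖ ^ p
      = (‖α‖ ^ 2 + ‖β‖ ^ 2
          + 2 * (‖α‖ * ‖β‖)
            * Real.cos (2 * Real.pi * s - (α * (starRingEnd ℂ) β).arg)) ^ (p / 2) := by
  have h1 : ‖α + β * e s‖ ^ p
      = ((‖α + β * e s‖) ^ (2:ℕ)) ^ (p/2) := by
    rw [← Real.rpow_natCast _ 2, ← Real.rpow_mul (norm_nonneg _)]
    norm_num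
    rw [show (2:ℝ) * (p/2) = p by ring]
  rw [h1, Complex.sq_norm, Complex.normSq_add]
  congr 1
  rw [map_mul Complex.normSq]
  have h2 : Complex.normSq (e s) = 1 := by
    have := abs_e s
    rw [← Complex.sq_norm, this]; norm_num
  rw [h2, mul_one, ← Complex.sq_norm, ← Complex.sq_norm]
  congr 1
  have h3 : α * (starRingEnd ℂ) (β * e s) = (α * (starRingEnd ℂ) β) * e (-s) := by
    rw [map_mul, conj_e]; ring
  rw [h3]
  set z := α * (starRingEnd ℂ) β with hz
  have h4 : z = (‖z‖ : ℂ) * Complex.exp (z.arg * Complex.I) :=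
    (Complex.norm_mul_exp_arg_mul_I z).symm
  have h5 : z * e (-s) = (‖z‖ : ℂ)
      * Complex.exp ((z.arg - 2*Real.pi*s : ℝ) * Complex.I) := by
    conv_lhs => rw [h4]
    unfold e
    rw [mul_assoc, ← Complex.exp_add]
    congr 2
    push_cast
    ring
  rw [h5]
  have h6 : ((‖z‖ : ℂ) * Complex.exp ((z.arg - 2*Real.pi*s : ℝ) * Complex.I)).re
      = ‖z‖ * Real.cos (z.arg - 2*Real.pi*s) := by
    rw [Complex.re_ofReal_mul, Complex.exp_ofReal_mul_I_re]
  rw [h6]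
  have h7 : ‖z‖ = ‖α‖ * ‖β‖ := by
    rw [hz, norm_mul, Complex.norm_conj]
  rw [h7, ← Real.cos_neg]
  ring_nf

/-! ### Main integral comparison -/

lemma compare (q A B : ℝ) (hq0 : 0 < q) (hq1 : q ≤ 1) (hA : 0 ≤ A) (hB : 0 ≤ B) :
    (1/2) * (∫ t in (0:ℝ)..1, (2 - 2 * Real.cos (2 * Real.pi * t)) ^ q) * ((A ^ 2) ^ q + (B ^ 2) ^ q)
      ≤ ∫ t in (0:ℝ)..1, (A ^ 2 + B ^ 2 + 2 * (A * B) * Real.cos (2 * Real.pi * t)) ^ q := by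
  have hcos : Continuous fun t : ℝ => Real.cos (2 * Real.pi * t) :=
    Real.continuous_cos.comp (continuous_const.mul continuous_id)
  have hcont1 : Continuous fun t : ℝ => (A ^ 2 + B ^ 2 + 2 * (A * B) * Real.cos (2 * Real.pi * t)) ^ q :=
    (continuous_const.add (continuous_const.mul hcos)).rpow_const (fun _ => Or.inr hq0.le)
  have hcont1' : Continuous fun t : ℝ => (A ^ 2 + B ^ 2 - 2 * (A * B) * Real.cos (2 * Real.pi * t)) ^ q :=
    (continuous_const.sub (continuous_const.mul hcos)).rpow_const (fun _ => Or.inr hq0.le)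
  have hcont2 : Continuous fun t : ℝ => (2 - 2 * Real.cos (2 * Real.pi * t)) ^ q :=
    (continuous_const.sub (continuous_const.mul hcos)).rpow_const (fun _ => Or.inr hq0.le)
  have hcont2' : Continuous fun t : ℝ => (2 + 2 * Real.cos (2 * Real.pi * t)) ^ q :=
    (continuous_const.add (continuous_const.mul hcos)).rpow_const (fun _ => Or.inr hq0.le)
  have hcos_shift : ∀ t : ℝ, Real.cos (2 * Real.pi * (t + 1/2)) = - Real.cos (2 * Real.pi * t) := by
    intro t
    rw [show 2 * Real.pi * (t + 1/2) = 2 * Real.pi * t + Real.pi by ring, Real.cos_add_pi]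
  have hper1 : Function.Periodic (fun t : ℝ => (A ^ 2 + B ^ 2 + 2 * (A * B) * Real.cos (2 * Real.pi * t)) ^ q) 1 := by
    intro t; simp only
    rw [show 2 * Real.pi * (t + 1) = 2 * Real.pi * t + 2 * Real.pi by ring, Real.cos_add_two_pi]
  have hper2 : Function.Periodic (fun t : ℝ => (2 + 2 * Real.cos (2 * Real.pi * t)) ^ q) 1 := by
    intro t; simp only
    rw [show 2 * Real.pi * (t + 1) = 2 * Real.pi * t + 2 * Real.pi by ring, Real.cos_add_two_pi]
  have hE1 : (∫ t in (0:ℝ)..1, (A ^ 2 + B ^ 2 - 2 * (A * B) * Real.cos (2 * Real.pi * t)) ^ q)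
      = ∫ t in (0:ℝ)..1, (A ^ 2 + B ^ 2 + 2 * (A * B) * Real.cos (2 * Real.pi * t)) ^ q := by
    rw [← shift_int _ hper1 (1/2)]
    apply intervalIntegral.integral_congr
    intro t _
    simp only
    rw [hcos_shift t]
    ring_nf
  have hE2 : (∫ t in (0:ℝ)..1, (2 + 2 * Real.cos (2 * Real.pi * t)) ^ q)
      = ∫ t in (0:ℝ)..1, (2 - 2 * Real.cos (2 * Real.pi * t)) ^ q := by
    rw [← shift_int _ hper2 (1/2)]
    apply intervalIntegral.integral_congr
    intro t _
    simp only
    rw [hcos_shift t]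
    ring_nf
  have hmono : (∫ t in (0:ℝ)..1, ((A ^ 2) ^ q + (B ^ 2) ^ q)
        * ((2 + 2 * Real.cos (2 * Real.pi * t)) ^ q + (2 - 2 * Real.cos (2 * Real.pi * t)) ^ q) / 2)
      ≤ ∫ t in (0:ℝ)..1, ((A ^ 2 + B ^ 2 + 2 * (A * B) * Real.cos (2 * Real.pi * t)) ^ q
          + (A ^ 2 + B ^ 2 - 2 * (A * B) * Real.cos (2 * Real.pi * t)) ^ q) := by
    apply intervalIntegral.integral_mono_on (by norm_num)
    · exact (((continuous_const.mul (hcont2'.add hcont2)).div_const 2)).intervalIntegrable 0 1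
    · exact (hcont1.add hcont1').intervalIntegrable 0 1
    · intro t _
      have := key_s8 q A B (Real.cos (2 * Real.pi * t)) hq0 hq1 hA hB
        (Real.neg_one_le_cos _) (Real.cos_le_one _)
      calc ((A ^ 2) ^ q + (B ^ 2) ^ q)
            * ((2 + 2 * Real.cos (2 * Real.pi * t)) ^ q + (2 - 2 * Real.cos (2 * Real.pi * t)) ^ q) / 2
          = ((A ^ 2) ^ q + (B ^ 2) ^ q)
            * ((2 + 2 * Real.cos (2 * Real.pi * t)) ^ q + (2 - 2 * Real.cos (2 * Real.pi * t)) ^ q) / 2 := rfl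
        _ ≤ _ := by
            convert this using 2 <;> ring_nf
  rw [intervalIntegral.integral_add (hcont1.intervalIntegrable 0 1) (hcont1'.intervalIntegrable 0 1)] at hmono
  have hlhs : (∫ t in (0:ℝ)..1, ((A ^ 2) ^ q + (B ^ 2) ^ q)
        * ((2 + 2 * Real.cos (2 * Real.pi * t)) ^ q + (2 - 2 * Real.cos (2 * Real.pi * t)) ^ q) / 2)
      = ((A ^ 2) ^ q + (B ^ 2) ^ q) / 2
        * ((∫ t in (0:ℝ)..1, (2 + 2 * Real.cos (2 * Real.pi * t)) ^ q)
          + ∫ t in (0:ℝ)..1, (2 - 2 * Real.cos (2 * Real.pi * t)) ^ q) := by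
    rw [← intervalIntegral.integral_add (hcont2'.intervalIntegrable 0 1) (hcont2.intervalIntegrable 0 1),
      ← intervalIntegral.integral_const_mul]
    apply intervalIntegral.integral_congr
    intro t _
    ring
  rw [hlhs, hE2] at hmono
  rw [hE1] at hmono
  linarith

/-! ### Main theorem -/

theorem binomial_Lp_lower_bound_two (L M : ℕ) (hLM : L < M) (α β : ℂ)
    (p : ℝ) (hp0 : 0 < p) (hp2 : p ≤ 2) :
    polyLp p (Polynomial.C α * Polynomial.X ^ L + Polynomial.C β * Polynomial.X ^ M) ≥
      Bp p * (‖α‖ ^ p + ‖β‖ ^ p) ^ (1/p) := by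
  have hq0 : 0 < p / 2 := by linarith
  have hq1 : p / 2 ≤ 1 := by linarith
  set a := ‖α‖ with ha'
  set b := ‖β‖ with hb'
  have ha : 0 ≤ a := norm_nonneg _
  have hb : 0 ≤ b := norm_nonneg _
  set θ := (α * (starRingEnd ℂ) β).arg with hθ'
  set k := M - L with hk'
  have hk : 0 < k := by omega
  set g0 : ℝ → ℝ := fun u => (a ^ 2 + b ^ 2 + 2 * (a * b) * Real.cos (2 * Real.pi * u)) ^ (p/2)
    with hg0'
  set g : ℝ → ℝ := fun u => (a ^ 2 + b ^ 2 + 2 * (a * b) * Real.cos (2 * Real.pi * u - θ)) ^ (p/2)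
    with hg'
  have hcos : Continuous fun t : ℝ => Real.cos (2 * Real.pi * t - θ) :=
    Real.continuous_cos.comp ((continuous_const.mul continuous_id).sub continuous_const)
  have hgcont : Continuous g :=
    (continuous_const.add (continuous_const.mul hcos)).rpow_const (fun _ => Or.inr hq0.le)
  have hgper : Function.Periodic g 1 := by
    intro t; simp only [hg']
    rw [show 2 * Real.pi * (t + 1) - θ = (2 * Real.pi * t - θ) + 2 * Real.pi by ring,
      Real.cos_add_two_pi]
  have hg0per : Function.Periodic g0 1 := by
    intro t; simp only [hg0']
    rw [show 2 * Real.pi * (t + 1) = 2 * Real.pi * t + 2 * Real.pi by ring, Real.cos_add_two_pi]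
  -- Step 1 : integrand of polyLp is g (k t)
  have heval : ∀ t : ℝ,
      ‖(Polynomial.C α * Polynomial.X ^ L + Polynomial.C β * Polynomial.X ^ M).eval (e t)‖ ^ p
        = g ((k:ℝ) * t) := by
    intro t
    have h1 : (Polynomial.C α * Polynomial.X ^ L + Polynomial.C β * Polynomial.X ^ M).eval (e t)
        = (e t) ^ L * (α + β * e ((k:ℝ) * t)) := by
      simp only [Polynomial.eval_add, Polynomial.eval_mul, Polynomial.eval_pow,
        Polynomial.eval_C, Polynomial.eval_X]
      rw [← e_pow k t, show M = L + k by omega, pow_add]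
      ring
    rw [h1, norm_mul, norm_pow, abs_e, one_pow, one_mul, point α β p ((k:ℝ) * t)]
  -- Step 2 : the polyLp integral equals ∫ g0
  have hIeq : (∫ t in (0:ℝ)..1,
        ‖(Polynomial.C α * Polynomial.X ^ L + Polynomial.C β * Polynomial.X ^ M).eval (e t)‖ ^ p)
      = ∫ t in (0:ℝ)..1, g0 t := by
    rw [intervalIntegral.integral_congr (g := fun t => g ((k:ℝ) * t)) (fun t _ => heval t)]
    rw [stretch_int g hgcont hgper k hk]
    have hshift : ∀ t : ℝ, g t = g0 (t + -(θ / (2 * Real.pi))) := by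
      intro t
      simp only [hg', hg0']
      congr 3
      have hpi : (2 : ℝ) * Real.pi ≠ 0 := by positivity
      field_simp
      ring
    rw [intervalIntegral.integral_congr (g := fun t => g0 (t + -(θ / (2 * Real.pi))))
      (fun t _ => hshift t)]
    exact shift_int g0 hg0per _
  -- Step 3 : the Bp integral
  have hBeq : (∫ t in (0:ℝ)..1, ‖1 - e t‖ ^ p)
      = ∫ t in (0:ℝ)..1, (2 - 2 * Real.cos (2 * Real.pi * t)) ^ (p/2) := by
    apply intervalIntegral.integral_congr
    intro t _
    show ‖1 - e t‖ ^ p = (2 - 2 * Real.cos (2 * Real.pi * t)) ^ (p/2)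
    rw [show (1:ℂ) - e t = 1 + (-1) * e t by ring, point 1 (-1) p t]
    rw [show ((1:ℂ) * (starRingEnd ℂ) (-1 : ℂ)) = -1 by simp]
    rw [Complex.arg_neg_one]
    rw [show Real.cos (2 * Real.pi * t - Real.pi) = - Real.cos (2 * Real.pi * t) by
      rw [← Real.cos_neg, neg_sub, Real.cos_pi_sub]]
    norm_num
    ring_nf
  -- Step 4 : assemble
  have hCC0 : 0 ≤ ∫ t in (0:ℝ)..1, (2 - 2 * Real.cos (2 * Real.pi * t)) ^ (p/2) := by
    apply intervalIntegral.integral_nonneg (by norm_num)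
    intro t _
    exact Real.rpow_nonneg (by nlinarith [Real.cos_le_one (2 * Real.pi * t)]) _
  have hcomp := compare (p/2) a b hq0 hq1 ha hb
  have hap : ((a:ℝ) ^ 2) ^ (p/2) = a ^ p := by
    rw [← Real.rpow_natCast a 2, ← Real.rpow_mul ha]
    norm_num
    rw [show (2:ℝ) * (p/2) = p by ring]
  have hbp : ((b:ℝ) ^ 2) ^ (p/2) = b ^ p := by
    rw [← Real.rpow_natCast b 2, ← Real.rpow_mul hb]
    norm_num
    rw [show (2:ℝ) * (p/2) = p by ring]
  rw [hap, hbp] at hcomp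
  have hab0 : 0 ≤ a ^ p + b ^ p :=
    add_nonneg (Real.rpow_nonneg ha _) (Real.rpow_nonneg hb _)
  unfold polyLp Bp
  rw [hIeq, hBeq]
  rw [← Real.mul_rpow (by linarith : (0:ℝ) ≤ 1/2 * ∫ t in (0:ℝ)..1, (2 - 2 * Real.cos (2 * Real.pi * t)) ^ (p/2)) hab0]
  apply Real.rpow_le_rpow
  · positivity
  · calc 1/2 * (∫ t in (0:ℝ)..1, (2 - 2 * Real.cos (2 * Real.pi * t)) ^ (p/2)) * (a ^ p + b ^ p)
        = 1/2 * (∫ t in (0:ℝ)..1, (2 - 2 * Real.cos (2 * Real.pi * t)) ^ (p/2)) * (a ^ p + b ^ p) := rfl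
      _ ≤ _ := hcomp
  · positivity
end

section
/- Let F(z) = Σ_{n=0}^N a_n z^n be a polynomial with complex coefficients, and let L, M be integers with 0 ≤ L < M ≤ N and M - L > max{L, N - M}. Then the supremum norm of F over the closed unit disc satisfies ‖F‖_∞ ≥ |a_L| + |a_M|. -/
open Finset

lemma real_pow_eq_one {x : ℝ} (hx : 0 ≤ x) {n : ℕ} (hn : n ≠ 0) (h : x ^ n = 1) : x = 1 := by
  rcases lt_trichotomy x 1 with h1 | h1 | h1
  · have := pow_lt_one₀ hx h1 hn
    rw [h] at this; exact absurd this (lt_irrefl 1)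
  · exact h1
  · have := one_lt_pow₀ h1 hn
    rw [h] at this; exact absurd this (lt_irrefl 1)

lemma exists_pow_root {u : ℂ} (hu : ‖u‖ = 1) {n : ℕ} (hn : n ≠ 0) :
    ∃ z : ℂ, z ^ n = u ∧ ‖z‖ = 1 := by
  have hu0 : u ≠ 0 := by intro h; simp [h] at hu
  have hzn : Complex.exp (Complex.log u / n) ^ n = u := by
    rw [← Complex.exp_nat_mul, mul_div_cancel₀]
    · exact Complex.exp_log hu0
    · exact_mod_cast hn
  refine ⟨_, hzn, real_pow_eq_one (norm_nonneg _) hn ?_⟩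
  rw [← norm_pow, hzn, hu]

lemma rou_sum {d : ℕ} {ω : ℂ} (hω : IsPrimitiveRoot ω d) (m : ℕ) :
    ∑ j ∈ Finset.range d, (ω ^ m) ^ j = if d ∣ m then (d : ℂ) else 0 := by
  by_cases hdvd : d ∣ m
  · rw [if_pos hdvd, (hω.pow_eq_one_iff_dvd m).mpr hdvd]; simp
  · rw [if_neg hdvd]
    have hne : ω ^ m ≠ 1 := fun h => hdvd ((hω.pow_eq_one_iff_dvd m).mp h)
    rw [geom_sum_eq hne]
    have : (ω ^ m) ^ d = 1 := by
      rw [← pow_mul, mul_comm, pow_mul, hω.pow_eq_one, one_pow]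
    rw [this]; simp

lemma filter_eq_pair (N L M d : ℕ) (hM : M = L + d) (hMN : M ≤ N)
    (hdL : L < d) (hdNM : N - M < d) :
    (Finset.range (N+1)).filter (fun i => d ∣ ((d - 1) * L + i)) = {L, M} := by
  have key : d * L = (d - 1) * L + L := by
    cases d with
    | zero => omega
    | succ d' => simp [Nat.succ_mul, Nat.succ_sub_one]
  ext i
  simp only [Finset.mem_filter, Finset.mem_range, Finset.mem_insert, Finset.mem_singleton]
  constructor
  · rintro ⟨hiN, k, hk⟩
    rcases lt_trichotomy k L with h1 | h1 | h1
    · exfalso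
      have h4 : d * (k+1) ≤ d * L := Nat.mul_le_mul_left d (by omega)
      have h5 : d * (k+1) = d * k + d := by ring
      omega
    · subst h1; left; omega
    rcases Nat.lt_or_ge k (L + 2) with h2 | h2
    · have hkL1 : k = L + 1 := by omega
      subst hkL1
      have h5 : d * (L + 1) = d * L + d := by ring
      right; omega
    · exfalso
      have h6 : d * (L + 2) ≤ d * k := Nat.mul_le_mul_left d h2
      have h7 : d * (L+2) = d * L + d + d := by ring
      omega
  · rintro (h | h)
    · exact ⟨by omega, L, by omega⟩
    · refine ⟨by omega, L + 1, ?_⟩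
      have h5 : d * (L + 1) = d * L + d := by ring
      omega

lemma key_identity (F : Polynomial ℂ) (N L M d : ℕ) (hFN : F.natDegree ≤ N)
    (hM : M = L + d) (hMN : M ≤ N) (hdL : L < d) (hdNM : N - M < d)
    {ω : ℂ} (hω : IsPrimitiveRoot ω d) (z : ℂ) :
    ∑ j ∈ Finset.range d, ω ^ ((d-1)*L*j) * F.eval (ω ^ j * z)
      = d * (F.coeff L * z ^ L + F.coeff M * z ^ M) := by
  have heval : ∀ x : ℂ, F.eval x = ∑ i ∈ Finset.range (N+1), F.coeff i * x ^ i :=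
    Polynomial.eval_eq_sum_range' (by omega)
  have hterm : ∀ j i : ℕ, ω ^ ((d-1)*L*j) * (F.coeff i * (ω ^ j * z) ^ i)
      = F.coeff i * z ^ i * (ω ^ ((d-1)*L + i)) ^ j := by
    intro j i
    rw [mul_pow, ← pow_mul, ← pow_mul,
      show ((d-1)*L + i)*j = (d-1)*L*j + j*i by ring, pow_add]
    ring
  calc ∑ j ∈ Finset.range d, ω ^ ((d-1)*L*j) * F.eval (ω ^ j * z)
      = ∑ j ∈ Finset.range d, ∑ i ∈ Finset.range (N+1),
          F.coeff i * z ^ i * (ω ^ ((d-1)*L + i)) ^ j := by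
        refine Finset.sum_congr rfl fun j _ => ?_
        rw [heval, Finset.mul_sum]
        exact Finset.sum_congr rfl fun i _ => hterm j i
    _ = ∑ i ∈ Finset.range (N+1), ∑ j ∈ Finset.range d,
          F.coeff i * z ^ i * (ω ^ ((d-1)*L + i)) ^ j := Finset.sum_comm
    _ = ∑ i ∈ Finset.range (N+1),
          F.coeff i * z ^ i * (if d ∣ ((d-1)*L + i) then (d:ℂ) else 0) := by
        refine Finset.sum_congr rfl fun i _ => ?_
        rw [← Finset.mul_sum, rou_sum hω]
    _ = ∑ i ∈ (Finset.range (N+1)).filter (fun i => d ∣ ((d - 1) * L + i)),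
          F.coeff i * z ^ i * d := by
        rw [Finset.sum_filter]
        refine Finset.sum_congr rfl fun i _ => ?_
        split_ifs <;> simp
    _ = ∑ i ∈ ({L, M} : Finset ℕ), F.coeff i * z ^ i * d := by
        rw [filter_eq_pair N L M d hM hMN hdL hdNM]
    _ = d * (F.coeff L * z ^ L + F.coeff M * z ^ M) := by
        rw [Finset.sum_pair (by omega : L ≠ M)]; ring

lemma exists_align (a b : ℂ) {d : ℕ} (hd : d ≠ 0) (L M : ℕ) (hM : M = L + d) :
    ∃ z₀ : ℂ, ‖z₀‖ = 1 ∧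
      ‖a * z₀ ^ L + b * z₀ ^ M‖ = ‖a‖ + ‖b‖ := by
  by_cases ha : a = 0
  · exact ⟨1, by simp, by simp [ha]⟩
  by_cases hb : b = 0
  · exact ⟨1, by simp, by simp [hb]⟩
  have hr : (0:ℝ) < ‖a‖ := norm_pos_iff.mpr ha
  have hs : (0:ℝ) < ‖b‖ := norm_pos_iff.mpr hb
  set u : ℂ := (a * (starRingEnd ℂ b)) / ((‖a‖ : ℂ) * (‖b‖ : ℂ)) with hu_def
  have hu : ‖u‖ = 1 := by
    rw [hu_def, norm_div, norm_mul, norm_mul, Complex.norm_conj, Complex.norm_real,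
      Complex.norm_real, norm_norm, norm_norm]
    field_simp
  obtain ⟨z₀, hzd, hz1⟩ := exists_pow_root hu hd
  refine ⟨z₀, hz1, ?_⟩
  have hbu : b * u = a * ((‖b‖ / ‖a‖ : ℝ) : ℂ) := by
    rw [hu_def]
    have hcon : b * (a * (starRingEnd ℂ) b) = a * ((‖b‖ : ℂ))^2 := by
      have := Complex.mul_conj b
      rw [Complex.normSq_eq_norm_sq] at this
      push_cast at this ⊢
      rw [show b * (a * (starRingEnd ℂ) b) = a * (b * (starRingEnd ℂ) b) by ring, this]
    have ha' : (‖a‖ : ℂ) ≠ 0 := by exact_mod_cast hr.ne'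
    have hb' : (‖b‖ : ℂ) ≠ 0 := by exact_mod_cast hs.ne'
    push_cast
    field_simp
    rw [Complex.mul_conj, Complex.normSq_eq_norm_sq, Complex.ofReal_pow]
  have hsplit : a * z₀ ^ L + b * z₀ ^ M = z₀ ^ L * (a + b * u) := by
    rw [hM, pow_add, hzd]; ring
  rw [hsplit, norm_mul, norm_pow, hz1, one_pow, one_mul, hbu]
  have : a + a * ((‖b‖ / ‖a‖ : ℝ) : ℂ)
      = a * (((‖a‖ + ‖b‖) / ‖a‖ : ℝ) : ℂ) := by
    push_cast
    have ha' : (‖a‖ : ℂ) ≠ 0 := by exact_mod_cast hr.ne'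
    field_simp
  rw [this, norm_mul, Complex.norm_real, Real.norm_eq_abs,
    abs_of_pos (by positivity : (0:ℝ) < (‖a‖ + ‖b‖) / ‖a‖)]
  field_simp

theorem sup_norm_lower_bound (F : Polynomial ℂ) (N L M : ℕ)
    (hFN : F.natDegree ≤ N) (hLM : L < M) (hMN : M ≤ N)
    (hgap : M - L > max L (N - M)) :
    (⨆ z : Metric.closedBall (0:ℂ) 1, ‖F.eval (z : ℂ)‖) ≥
      ‖F.coeff L‖ + ‖F.coeff M‖ := by
  set d := M - L with hd_def
  have hdL : L < d := lt_of_le_of_lt (le_max_left _ _) hgap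
  have hdNM : N - M < d := lt_of_le_of_lt (le_max_right _ _) hgap
  have hd : 0 < d := by omega
  have hM : M = L + d := by omega
  set ω : ℂ := Complex.exp (2 * Real.pi * Complex.I / d) with hω_def
  have hω : IsPrimitiveRoot ω d := Complex.isPrimitiveRoot_exp d hd.ne'
  have habsω : ‖ω‖ = 1 := by
    apply real_pow_eq_one (norm_nonneg _) hd.ne'
    rw [← norm_pow, hω.pow_eq_one, norm_one]
  -- sup is an upper bound
  set S := (⨆ z : Metric.closedBall (0:ℂ) 1, ‖F.eval (z : ℂ)‖) with hS_def
  have hbdd : BddAbove (Set.range fun z : Metric.closedBall (0:ℂ) 1 => ‖F.eval (z : ℂ)‖) := by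
    obtain ⟨C, hC⟩ := (isCompact_closedBall (0:ℂ) 1).exists_bound_of_continuousOn
      (Polynomial.continuous F).continuousOn
    refine ⟨C, ?_⟩
    rintro x ⟨z, rfl⟩
    simpa using hC z z.2
  have hub : ∀ w : ℂ, ‖w‖ ≤ 1 → ‖F.eval w‖ ≤ S := by
    intro w hw
    exact le_ciSup hbdd ⟨w, by simpa [Metric.mem_closedBall] using hw⟩
  obtain ⟨z₀, hz1, heq⟩ := exists_align (F.coeff L) (F.coeff M) hd.ne' L M hM
  have hid := key_identity F N L M d hFN hM hMN hdL hdNM hω z₀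
  have hchain : (d:ℝ) * (‖F.coeff L‖ + ‖F.coeff M‖) ≤ (d:ℝ) * S := by
    calc (d:ℝ) * (‖F.coeff L‖ + ‖F.coeff M‖)
        = ‖(d:ℂ) * (F.coeff L * z₀ ^ L + F.coeff M * z₀ ^ M)‖ := by
          rw [norm_mul, heq, Complex.norm_natCast]
      _ = ‖∑ j ∈ Finset.range d, ω ^ ((d-1)*L*j) * F.eval (ω ^ j * z₀)‖ := by
          rw [hid]
      _ ≤ ∑ j ∈ Finset.range d, ‖ω ^ ((d-1)*L*j) * F.eval (ω ^ j * z₀)‖ :=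
          norm_sum_le _ _
      _ = ∑ j ∈ Finset.range d, ‖F.eval (ω ^ j * z₀)‖ := by
          refine Finset.sum_congr rfl fun j _ => ?_
          rw [norm_mul, norm_pow, habsω, one_pow, one_mul]
      _ ≤ ∑ j ∈ Finset.range d, S := by
          refine Finset.sum_le_sum fun j _ => hub _ ?_
          rw [norm_mul, norm_pow, habsω, one_pow, one_mul, hz1]
      _ = (d:ℝ) * S := by rw [Finset.sum_const, Finset.card_range, nsmul_eq_mul]
  have hd' : (0:ℝ) < d := by exact_mod_cast hd
  exact le_of_mul_le_mul_left hchain hd'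
end
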